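/- arXiv:1903.03460 — 5 statements merged into one kernel-verified Lean document; each statement's English description precedes it below -/
import Mathlib

section
/- Let S⁶ = {(r,z₁,z₂,z₃) ∈ ℝ × ℂ³ : r² + |z₁|² + |z₂|² + |z₃|² = 1}. Define an equivalence relation on S⁶ by (r,z₁,z₂,z₃) ~ (r',z₁',z₂',z₃') iff r = r' and there exist complex numbers t₁,t₂,t₃ with |t₁| = |t₂| = |t₃| = 1 and t₁t₂t₃ = 1 such that (z₁',z₂',z₃') = (t₁z₁, t₂z₂, t₃z₃). Then the quotient space S⁶/~ is homeomorphic to S⁴. (This is the orbit space of the complexity-one action on S⁶ of the subtorus T² = {(t₁,t₂,t₃) ∈ T³ : t₁t₂t₃ = 1}, which coincides with the action of a maximal torus of G₂ on G₂/SU(3).) -/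
/-- The unit sphere `S⁶ ⊂ ℝ × ℂ³`. -/
abbrev S6 : Type :=
  {p : ℝ × ℂ × ℂ × ℂ //
    p.1 ^ 2 + ‖p.2.1‖ ^ 2 + ‖p.2.2.1‖ ^ 2 + ‖p.2.2.2‖ ^ 2 = 1}

/-- `(r,z₁,z₂,z₃) ~ (r, t₁z₁, t₂z₂, t₃z₃)` for unit complex numbers with `t₁t₂t₃ = 1`. -/
def rel1 (x y : S6) : Prop :=
  y.1.1 = x.1.1 ∧
  ∃ t₁ t₂ t₃ : ℂ, ‖t₁‖ = 1 ∧ ‖t₂‖ = 1 ∧ ‖t₃‖ = 1 ∧ t₁ * t₂ * t₃ = 1 ∧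
    y.1.2.1 = t₁ * x.1.2.1 ∧ y.1.2.2.1 = t₂ * x.1.2.2.1 ∧ y.1.2.2.2 = t₃ * x.1.2.2.2

noncomputable section

namespace S6Pf

open Real

/-- coordinates of the invariant map, before normalization -/
def pr (x : ℝ × ℂ × ℂ × ℂ) : Fin 5 → ℝ :=
  ![x.1,
    ‖x.2.1‖ ^ 2 - ‖x.2.2.1‖ ^ 2,
    4 * (‖x.2.1‖ ^ 2 * ‖x.2.2.1‖ ^ 2) - ‖x.2.2.2‖ ^ 2,
    (2 * (x.2.1 * x.2.2.1 * x.2.2.2)).re,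
    (2 * (x.2.1 * x.2.2.1 * x.2.2.2)).im]

def P (x : ℝ × ℂ × ℂ × ℂ) : EuclideanSpace ℝ (Fin 5) :=
  (WithLp.equiv 2 (Fin 5 → ℝ)).symm (pr x)

lemma P_apply (x : ℝ × ℂ × ℂ × ℂ) (i : Fin 5) : P x i = pr x i := rfl

lemma P_0 (x : ℝ × ℂ × ℂ × ℂ) : P x 0 = x.1 := rfl
lemma P_1 (x : ℝ × ℂ × ℂ × ℂ) : P x 1 = ‖x.2.1‖ ^ 2 - ‖x.2.2.1‖ ^ 2 := rfl
lemma P_2 (x : ℝ × ℂ × ℂ × ℂ) :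
    P x 2 = 4 * (‖x.2.1‖ ^ 2 * ‖x.2.2.1‖ ^ 2) - ‖x.2.2.2‖ ^ 2 := rfl
lemma P_3 (x : ℝ × ℂ × ℂ × ℂ) : P x 3 = (2 * (x.2.1 * x.2.2.1 * x.2.2.2)).re := rfl
lemma P_4 (x : ℝ × ℂ × ℂ × ℂ) : P x 4 = (2 * (x.2.1 * x.2.2.1 * x.2.2.2)).im := rfl

lemma norm_sq_m (a b c : ℂ) :
    ‖2 * (a * b * c)‖ ^ 2 = 4 * (‖a‖ ^ 2 * ‖b‖ ^ 2 * ‖c‖ ^ 2) := by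
  simp [norm_mul]; ring

lemma sq_inj {a b : ℝ} (ha : 0 ≤ a) (hb : 0 ≤ b) (h : a ^ 2 = b ^ 2) : a = b := by
  nlinarith [sq_nonneg (a - b), sq_nonneg (a + b)]

lemma continuous_P : Continuous P := by
  apply Continuous.comp (PiLp.continuous_toLp 2 (fun _ : Fin 5 => ℝ))
  apply continuous_pi
  intro i
  fin_cases i
  · show Continuous fun a : ℝ × ℂ × ℂ × ℂ => a.1
    fun_prop
  · show Continuous fun a : ℝ × ℂ × ℂ × ℂ => ‖a.2.1‖ ^ 2 - ‖a.2.2.1‖ ^ 2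
    fun_prop
  · show Continuous fun a : ℝ × ℂ × ℂ × ℂ =>
      4 * (‖a.2.1‖ ^ 2 * ‖a.2.2.1‖ ^ 2) - ‖a.2.2.2‖ ^ 2
    fun_prop
  · show Continuous fun a : ℝ × ℂ × ℂ × ℂ => (2 * (a.2.1 * a.2.2.1 * a.2.2.2)).re
    fun_prop
  · show Continuous fun a : ℝ × ℂ × ℂ × ℂ => (2 * (a.2.1 * a.2.2.1 * a.2.2.2)).im
    fun_prop

lemma P_ne_zero {x : ℝ × ℂ × ℂ × ℂ}
    (hx : x.1 ^ 2 + ‖x.2.1‖ ^ 2 + ‖x.2.2.1‖ ^ 2 + ‖x.2.2.2‖ ^ 2 = 1) : P x ≠ 0 := by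
  intro h
  have h0 : x.1 = 0 := by have := congrFun (congrArg WithLp.ofLp h) 0; simpa [P_0] using this
  have h1 : ‖x.2.1‖ ^ 2 - ‖x.2.2.1‖ ^ 2 = 0 := by have := congrFun (congrArg WithLp.ofLp h) 1; simpa [P_1] using this
  have h2 : 4 * (‖x.2.1‖ ^ 2 * ‖x.2.2.1‖ ^ 2) - ‖x.2.2.2‖ ^ 2 = 0 := by
    have := congrFun (congrArg WithLp.ofLp h) 2; simpa [P_2] using this
  have h3 : (2 * (x.2.1 * x.2.2.1 * x.2.2.2)).re = 0 := by
    have := congrFun (congrArg WithLp.ofLp h) 3; simpa [P_3] using this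
  have h4 : (2 * (x.2.1 * x.2.2.1 * x.2.2.2)).im = 0 := by
    have := congrFun (congrArg WithLp.ofLp h) 4; simpa [P_4] using this
  have hm : 2 * (x.2.1 * x.2.2.1 * x.2.2.2) = 0 := Complex.ext h3 h4
  have hm2 : 4 * (‖x.2.1‖ ^ 2 * ‖x.2.2.1‖ ^ 2 * ‖x.2.2.2‖ ^ 2) = 0 := by
    rw [← norm_sq_m, hm]; simp
  set u := ‖x.2.1‖ ^ 2 with hu
  have hv : ‖x.2.2.1‖ ^ 2 = u := by linarith
  have hw : ‖x.2.2.2‖ ^ 2 = 4 * (u * u) := by rw [hv] at h2; linarith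
  have h16 : u ^ 4 = 0 := by nlinarith [hm2]
  have hu0 : u = 0 := by
    have := pow_eq_zero_iff (n := 4) (by norm_num) |>.mp h16
    exact this
  rw [h0, hv, hw, hu0] at hx
  norm_num at hx


def Fmap (x : S6) : Metric.sphere (0 : EuclideanSpace ℝ (Fin 5)) 1 :=
  ⟨‖P x.1‖⁻¹ • P x.1, by
    rw [mem_sphere_zero_iff_norm]
    exact norm_smul_inv_norm (P_ne_zero x.2)⟩

lemma continuous_Fmap : Continuous Fmap := by
  apply Continuous.subtype_mk
  have hP : Continuous fun x : S6 => P x.1 := continuous_P.comp continuous_subtype_val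
  exact (hP.norm.inv₀ fun x => norm_ne_zero_iff.mpr (P_ne_zero x.2)).smul hP

lemma exists_t {z₁ z₂ z₃ w₁ w₂ w₃ : ℂ} (h1 : ‖w₁‖ = ‖z₁‖) (h2 : ‖w₂‖ = ‖z₂‖)
    (h3 : ‖w₃‖ = ‖z₃‖) (hp : w₁ * w₂ * w₃ = z₁ * z₂ * z₃) :
    ∃ t₁ t₂ t₃ : ℂ, ‖t₁‖ = 1 ∧ ‖t₂‖ = 1 ∧ ‖t₃‖ = 1 ∧ t₁ * t₂ * t₃ = 1 ∧
      w₁ = t₁ * z₁ ∧ w₂ = t₂ * z₂ ∧ w₃ = t₃ * z₃ := by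
  have key : ∀ z w : ℂ, ‖w‖ = ‖z‖ → z ≠ 0 → ‖w / z‖ = 1 ∧ w = (w / z) * z := by
    intro z w h hz
    constructor
    · rw [norm_div, h, div_self (norm_ne_zero_iff.mpr hz)]
    · field_simp
  by_cases hz1 : z₁ = 0
  · have hw1 : w₁ = 0 := by
      rw [← norm_eq_zero, h1, norm_eq_zero]; exact hz1
    set t₂ : ℂ := if z₂ = 0 then 1 else w₂ / z₂ with ht₂def
    set t₃ : ℂ := if z₃ = 0 then 1 else w₃ / z₃ with ht₃def
    have ht₂ : ‖t₂‖ = 1 ∧ w₂ = t₂ * z₂ := by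
      by_cases h : z₂ = 0
      · have : w₂ = 0 := by rw [← norm_eq_zero, h2, norm_eq_zero]; exact h
        simp [ht₂def, h, this]
      · simpa [ht₂def, h] using key z₂ w₂ h2 h
    have ht₃ : ‖t₃‖ = 1 ∧ w₃ = t₃ * z₃ := by
      by_cases h : z₃ = 0
      · have : w₃ = 0 := by rw [← norm_eq_zero, h3, norm_eq_zero]; exact h
        simp [ht₃def, h, this]
      · simpa [ht₃def, h] using key z₃ w₃ h3 h
    have hne : t₂ * t₃ ≠ 0 := by
      intro h
      have : ‖t₂ * t₃‖ = 0 := by rw [h, norm_zero]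
      rw [norm_mul, ht₂.1, ht₃.1] at this; norm_num at this
    refine ⟨(t₂ * t₃)⁻¹, t₂, t₃, ?_, ht₂.1, ht₃.1, ?_, ?_, ht₂.2, ht₃.2⟩
    · rw [norm_inv, norm_mul, ht₂.1, ht₃.1]; norm_num
    · rw [mul_assoc]; exact inv_mul_cancel₀ hne
    · simp [hz1, hw1]
  · by_cases hz2 : z₂ = 0
    · have hw2 : w₂ = 0 := by rw [← norm_eq_zero, h2, norm_eq_zero]; exact hz2
      set t₁ : ℂ := w₁ / z₁ with ht₁def
      set t₃ : ℂ := if z₃ = 0 then 1 else w₃ / z₃ with ht₃def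
      have ht₁ := key z₁ w₁ h1 hz1
      have ht₃ : ‖t₃‖ = 1 ∧ w₃ = t₃ * z₃ := by
        by_cases h : z₃ = 0
        · have : w₃ = 0 := by rw [← norm_eq_zero, h3, norm_eq_zero]; exact h
          simp [ht₃def, h, this]
        · simpa [ht₃def, h] using key z₃ w₃ h3 h
      have hne : t₁ * t₃ ≠ 0 := by
        intro h
        have : ‖t₁ * t₃‖ = 0 := by rw [h, norm_zero]
        rw [norm_mul, ht₁.1, ht₃.1] at this; norm_num at this
      refine ⟨t₁, (t₁ * t₃)⁻¹, t₃, ht₁.1, ?_, ht₃.1, ?_, ht₁.2, ?_, ht₃.2⟩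
      · rw [norm_inv, norm_mul, ht₁.1, ht₃.1]; norm_num
      · field_simp; exact div_self hne
      · simp [hz2, hw2]
    · by_cases hz3 : z₃ = 0
      · have hw3 : w₃ = 0 := by rw [← norm_eq_zero, h3, norm_eq_zero]; exact hz3
        set t₁ : ℂ := w₁ / z₁ with ht₁def
        set t₂ : ℂ := w₂ / z₂ with ht₂def
        have ht₁ := key z₁ w₁ h1 hz1
        have ht₂ := key z₂ w₂ h2 hz2
        have hne : t₁ * t₂ ≠ 0 := by
          intro h
          have : ‖t₁ * t₂‖ = 0 := by rw [h, norm_zero]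
          rw [norm_mul, ht₁.1, ht₂.1] at this; norm_num at this
        refine ⟨t₁, t₂, (t₁ * t₂)⁻¹, ht₁.1, ht₂.1, ?_, ?_, ht₁.2, ht₂.2, ?_⟩
        · rw [norm_inv, norm_mul, ht₁.1, ht₂.1]; norm_num
        · field_simp; exact div_self hne
        · simp [hz3, hw3]
      · have ht₁ := key z₁ w₁ h1 hz1
        have ht₂ := key z₂ w₂ h2 hz2
        have ht₃ := key z₃ w₃ h3 hz3
        refine ⟨w₁ / z₁, w₂ / z₂, w₃ / z₃, ht₁.1, ht₂.1, ht₃.1, ?_,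
          ht₁.2, ht₂.2, ht₃.2⟩
        rw [div_mul_div_comm, div_mul_div_comm, hp]
        exact div_self (by simp [hz1, hz2, hz3])


lemma uniq2 {A w A' w' τ : ℝ} (hA : 0 ≤ A) (hw : 0 ≤ w) (hA' : 0 ≤ A') (hw' : 0 ≤ w')
    (hτ : 0 ≤ τ) (h1 : A' - w' = τ * (A - w)) (h2 : A' * w' = τ ^ 2 * (A * w)) :
    A' = τ * A ∧ w' = τ * w := by
  have hs : A' + w' = τ * (A + w) := by
    have hsq : (A' + w') ^ 2 = (τ * (A + w)) ^ 2 := by nlinarith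
    exact sq_inj (by linarith) (by positivity) hsq
  constructor <;> linarith

lemma norm_ofReal_mul_sq (τ : ℝ) (hτ : 0 ≤ τ) (m : ℂ) :
    ‖(τ : ℂ) * m‖ ^ 2 = τ ^ 2 * ‖m‖ ^ 2 := by
  rw [norm_mul, Complex.norm_real, Real.norm_eq_abs, abs_of_nonneg hτ, mul_pow]

set_option maxHeartbeats 1000000 in
lemma P_eq_of_smul {x y : ℝ × ℂ × ℂ × ℂ}
    (hx : x.1 ^ 2 + ‖x.2.1‖ ^ 2 + ‖x.2.2.1‖ ^ 2 + ‖x.2.2.2‖ ^ 2 = 1)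
    (hy : y.1 ^ 2 + ‖y.2.1‖ ^ 2 + ‖y.2.2.1‖ ^ 2 + ‖y.2.2.2‖ ^ 2 = 1)
    {τ : ℝ} (hτ : 1 ≤ τ) (h : P y = τ • P x) : P y = P x := by
  by_cases hτ1 : τ = 1
  · rw [hτ1] at h; simpa using h
  have hτgt : 1 < τ := lt_of_le_of_ne (by linarith) (Ne.symm hτ1)
  exfalso
  obtain ⟨rx, z1, z2, z3⟩ := x
  obtain ⟨ry, w1, w2, w3⟩ := y
  simp only at hx hy
  have h0 := congrFun (congrArg WithLp.ofLp h) 0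
  have h1 := congrFun (congrArg WithLp.ofLp h) 1
  have h2 := congrFun (congrArg WithLp.ofLp h) 2
  have h3 := congrFun (congrArg WithLp.ofLp h) 3
  have h4 := congrFun (congrArg WithLp.ofLp h) 4
  simp only [P_0, P_1, P_2, P_3, P_4, PiLp.smul_apply, smul_eq_mul] at h0 h1 h2 h3 h4
  set ux := ‖z1‖ ^ 2 with hux
  set vx := ‖z2‖ ^ 2 with hvx
  set wx := ‖z3‖ ^ 2 with hwx
  set uy := ‖w1‖ ^ 2 with huy
  set vy := ‖w2‖ ^ 2 with hvy
  set wy := ‖w3‖ ^ 2 with hwy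
  have hm : 2 * (w1 * w2 * w3) = (τ : ℂ) * (2 * (z1 * z2 * z3)) := by
    apply Complex.ext
    · simpa [Complex.re_ofReal_mul] using h3
    · simpa [Complex.im_ofReal_mul] using h4
  have hmn : 4 * (uy * vy * wy) = τ ^ 2 * (4 * (ux * vx * wx)) := by
    rw [← norm_sq_m, ← norm_sq_m, hm, norm_ofReal_mul_sq τ (by linarith)]
  have hux0 : 0 ≤ ux := sq_nonneg _
  have hvx0 : 0 ≤ vx := sq_nonneg _
  have hwx0 : 0 ≤ wx := sq_nonneg _
  have huy0 : 0 ≤ uy := sq_nonneg _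
  have hvy0 : 0 ≤ vy := sq_nonneg _
  have hwy0 : 0 ≤ wy := sq_nonneg _
  obtain ⟨hA, hW⟩ := uniq2 (A := 4 * (ux * vx)) (w := wx) (A' := 4 * (uy * vy)) (w' := wy)
    (by positivity) hwx0 (by positivity) hwy0 (by linarith) h2 (by linear_combination hmn)
  have hτ2 : 0 ≤ τ ^ 2 - 1 := by nlinarith
  have hSy2 : (uy + vy) ^ 2 = τ ^ 2 * (ux - vx) ^ 2 + τ * (4 * (ux * vx)) := by
    linear_combination (uy - vy + τ * (ux - vx)) * h1 + hA
  have hSx2 : (ux + vx) ^ 2 = (ux - vx) ^ 2 + 4 * (ux * vx) := by ring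
  have hS : ux + vx ≤ uy + vy := by
    nlinarith [hSy2, hSx2, sq_nonneg (ux - vx), mul_nonneg hux0 hvx0]
  have hry : ry ^ 2 = τ ^ 2 * rx ^ 2 := by rw [h0]; ring
  have key : (τ ^ 2 - 1) * rx ^ 2 + ((uy + vy) - (ux + vx)) + (τ - 1) * wx = 0 := by
    linear_combination hy - hx - hry - hW
  have n1 : 0 ≤ (τ ^ 2 - 1) * rx ^ 2 := mul_nonneg hτ2 (sq_nonneg rx)
  have n3 : 0 ≤ (τ - 1) * wx := mul_nonneg (by linarith) hwx0
  have t1 : (τ ^ 2 - 1) * rx ^ 2 = 0 := by linarith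
  have t3 : (τ - 1) * wx = 0 := by linarith
  have t2 : uy + vy = ux + vx := by linarith
  have hτ2' : 0 < τ ^ 2 - 1 := by nlinarith
  have hrx : rx ^ 2 = 0 := by
    rcases mul_eq_zero.mp t1 with h' | h'
    · linarith
    · exact h'
  have hwx1 : wx = 0 := by
    rcases mul_eq_zero.mp t3 with h' | h'
    · linarith
    · exact h'
  have hsq : (τ ^ 2 - 1) * (ux - vx) ^ 2 + (τ - 1) * (4 * (ux * vx)) = 0 := by
    linear_combination -hSy2 + hSx2 + (uy + vy + ux + vx) * t2
  have n1' : 0 ≤ (τ ^ 2 - 1) * (ux - vx) ^ 2 := mul_nonneg hτ2 (sq_nonneg _)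
  have n2' : 0 ≤ (τ - 1) * (4 * (ux * vx)) :=
    mul_nonneg (by linarith) (by positivity)
  have hd : (ux - vx) ^ 2 = 0 := by
    have hz : (τ ^ 2 - 1) * (ux - vx) ^ 2 = 0 := by linarith
    rcases mul_eq_zero.mp hz with h' | h'
    · linarith
    · exact h'
  have hp : ux * vx = 0 := by
    have hz : (τ - 1) * (4 * (ux * vx)) = 0 := by linarith
    rcases mul_eq_zero.mp hz with h' | h'
    · linarith
    · linarith
  have hdd : ux = vx := by
    have := pow_eq_zero_iff (n := 2) (by norm_num) |>.mp hd
    linarith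
  rw [hdd] at hp
  have hvx1 : vx = 0 := mul_self_eq_zero.mp hp
  have hux1 : ux = 0 := by rw [hdd]; exact hvx1
  linarith [hx]


lemma rel_of_P_eq {x y : ℝ × ℂ × ℂ × ℂ}
    (hx : x.1 ^ 2 + ‖x.2.1‖ ^ 2 + ‖x.2.2.1‖ ^ 2 + ‖x.2.2.2‖ ^ 2 = 1)
    (hy : y.1 ^ 2 + ‖y.2.1‖ ^ 2 + ‖y.2.2.1‖ ^ 2 + ‖y.2.2.2‖ ^ 2 = 1)
    (h : P y = P x) :
    y.1 = x.1 ∧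
    ∃ t₁ t₂ t₃ : ℂ, ‖t₁‖ = 1 ∧ ‖t₂‖ = 1 ∧ ‖t₃‖ = 1 ∧ t₁ * t₂ * t₃ = 1 ∧
      y.2.1 = t₁ * x.2.1 ∧ y.2.2.1 = t₂ * x.2.2.1 ∧ y.2.2.2 = t₃ * x.2.2.2 := by
  obtain ⟨rx, z1, z2, z3⟩ := x
  obtain ⟨ry, w1, w2, w3⟩ := y
  simp only at hx hy ⊢
  have h0 := congrFun (congrArg WithLp.ofLp h) 0
  have h1 := congrFun (congrArg WithLp.ofLp h) 1
  have h2 := congrFun (congrArg WithLp.ofLp h) 2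
  have h3 := congrFun (congrArg WithLp.ofLp h) 3
  have h4 := congrFun (congrArg WithLp.ofLp h) 4
  simp only [P_0, P_1, P_2, P_3, P_4] at h0 h1 h2 h3 h4
  have hm : 2 * (w1 * w2 * w3) = 2 * (z1 * z2 * z3) := Complex.ext h3 h4
  have hprod : w1 * w2 * w3 = z1 * z2 * z3 :=
    mul_left_cancel₀ (two_ne_zero) hm
  set ux := ‖z1‖ ^ 2 with hux
  set vx := ‖z2‖ ^ 2 with hvx
  set wx := ‖z3‖ ^ 2 with hwx
  set uy := ‖w1‖ ^ 2 with huy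
  set vy := ‖w2‖ ^ 2 with hvy
  set wy := ‖w3‖ ^ 2 with hwy
  have hmn : 4 * (uy * vy * wy) = 4 * (ux * vx * wx) := by
    rw [← norm_sq_m, ← norm_sq_m, hm]
  obtain ⟨hA, hW⟩ := uniq2 (A := 4 * (ux * vx)) (w := wx) (A' := 4 * (uy * vy)) (w' := wy)
    (by positivity) (sq_nonneg _) (by positivity) (sq_nonneg _) zero_le_one
    (by linarith) (by linear_combination hmn)
  rw [one_mul] at hA hW
  have hsum : uy + vy = ux + vx := by nlinarith [hx, hy, h0]
  have hu : uy = ux := by linarith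
  have hv : vy = vx := by linarith
  have e1 : ‖w1‖ = ‖z1‖ := sq_inj (norm_nonneg _) (norm_nonneg _) hu
  have e2 : ‖w2‖ = ‖z2‖ := sq_inj (norm_nonneg _) (norm_nonneg _) hv
  have e3 : ‖w3‖ = ‖z3‖ := sq_inj (norm_nonneg _) (norm_nonneg _) hW
  exact ⟨h0, exists_t e1 e2 e3 hprod⟩


set_option maxHeartbeats 1000000 in
lemma surj (y : EuclideanSpace ℝ (Fin 5)) (hy : ‖y‖ = 1) :
    ∃ x : ℝ × ℂ × ℂ × ℂ,
      (x.1 ^ 2 + ‖x.2.1‖ ^ 2 + ‖x.2.2.1‖ ^ 2 + ‖x.2.2.2‖ ^ 2 = 1) ∧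
      ∃ τ : ℝ, 0 < τ ∧ P x = τ • y := by
  have hsum : (y 0) ^ 2 + (y 1) ^ 2 + (y 2) ^ 2 + (y 3) ^ 2 + (y 4) ^ 2 = 1 := by
    have h1 : Real.sqrt (∑ i, ‖y i‖ ^ 2) = 1 := by
      rw [← EuclideanSpace.norm_eq]; exact hy
    rw [Real.sqrt_eq_one, Fin.sum_univ_five] at h1
    simpa [Real.norm_eq_abs, sq_abs] using h1
  set r := y 0 with hrdef
  set s := y 1 with hsdef
  set e := y 2 with hedef
  set m : ℂ := ⟨y 3, y 4⟩ with hmdef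
  have hm2 : ‖m‖ ^ 2 = (y 3) ^ 2 + (y 4) ^ 2 := by
    rw [Complex.sq_norm, hmdef, Complex.normSq_mk]; ring
  have hsum' : r ^ 2 + s ^ 2 + e ^ 2 + ‖m‖ ^ 2 = 1 := by rw [hm2]; linarith
  set k := Real.sqrt (e ^ 2 + 4 * ‖m‖ ^ 2) with hkdef
  have hk0 : 0 ≤ k := Real.sqrt_nonneg _
  have hk2 : k ^ 2 = e ^ 2 + 4 * ‖m‖ ^ 2 := Real.sq_sqrt (by positivity)
  have hke : |e| ≤ k := by
    rw [hkdef, ← Real.sqrt_sq_eq_abs]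
    exact Real.sqrt_le_sqrt (by nlinarith [sq_nonneg ‖m‖])
  have hke1 : e ≤ k := le_trans (le_abs_self e) hke
  have hke2 : -k ≤ e := by linarith [neg_abs_le e]
  set H : ℝ → ℝ := fun τ =>
    (τ * r) ^ 2 + Real.sqrt ((τ * s) ^ 2 + (τ * k + τ * e) / 2) + (τ * k - τ * e) / 2
    with hHdef
  have Hcont : Continuous H := by
    rw [hHdef]
    refine (Continuous.add ?_ ?_).add ?_
    · fun_prop
    · exact Real.continuous_sqrt.comp (by fun_prop)
    · fun_prop
  have H0 : H 0 = 0 := by simp [hHdef]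
  have H9 : 1 ≤ H 9 := by
    have hsqnn : 0 ≤ Real.sqrt ((9 * s) ^ 2 + (9 * k + 9 * e) / 2) := Real.sqrt_nonneg _
    have hlast : 0 ≤ (9 * k - 9 * e) / 2 := by linarith
    have hH9 : H 9 = (9 * r) ^ 2 + Real.sqrt ((9 * s) ^ 2 + (9 * k + 9 * e) / 2)
        + (9 * k - 9 * e) / 2 := by rw [hHdef]
    rcases (show r ^ 2 ≥ 1/3 ∨ s ^ 2 ≥ 1/3 ∨ e ^ 2 + ‖m‖ ^ 2 ≥ 1/3 by
        by_contra hc; push_neg at hc; nlinarith [hc.1, hc.2.1, hc.2.2]) with h | h | h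
    · rw [hH9]; nlinarith
    · have : (1:ℝ) ≤ Real.sqrt ((9 * s) ^ 2 + (9 * k + 9 * e) / 2) := by
        rw [Real.le_sqrt zero_le_one (by nlinarith [sq_nonneg (9 * s)])]
        nlinarith
      rw [hH9]; nlinarith [sq_nonneg (9 * r)]
    · have hk12 : (1:ℝ)/2 ≤ k := by nlinarith
      rcases le_or_gt 0 e with he | he
      · have : (1:ℝ) ≤ Real.sqrt ((9 * s) ^ 2 + (9 * k + 9 * e) / 2) := by
          rw [Real.le_sqrt zero_le_one (by nlinarith [sq_nonneg (9 * s)])]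
          nlinarith [sq_nonneg (9 * s)]
        rw [hH9]; nlinarith [sq_nonneg (9 * r)]
      · have : (1:ℝ) ≤ (9 * k - 9 * e) / 2 := by nlinarith
        rw [hH9]; nlinarith [sq_nonneg (9 * r)]
  obtain ⟨τ, hτmem, hτeq⟩ : ∃ τ ∈ Set.Icc (0:ℝ) 9, H τ = 1 := by
    have h := intermediate_value_Icc (by norm_num : (0:ℝ) ≤ 9) Hcont.continuousOn
    have h1 : (1:ℝ) ∈ Set.Icc (H 0) (H 9) := by rw [H0]; exact ⟨zero_le_one, H9⟩
    exact h h1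
  have hτ0 : 0 < τ := by
    rcases lt_or_eq_of_le hτmem.1 with h | h
    · exact h
    · exfalso; rw [← h, H0] at hτeq; norm_num at hτeq
  have hτeq' : (τ * r) ^ 2 + Real.sqrt ((τ * s) ^ 2 + (τ * k + τ * e) / 2)
      + (τ * k - τ * e) / 2 = 1 := by rw [hHdef] at hτeq; exact hτeq
  set w := (τ * k - τ * e) / 2 with hwdef
  have hw0 : 0 ≤ w := by
    rw [hwdef]; nlinarith [mul_nonneg hτ0.le (sub_nonneg.mpr hke1)]
  set c := (τ * k + τ * e) / 2 with hcdef
  have hc0 : 0 ≤ c := by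
    rw [hcdef]; nlinarith [mul_nonneg hτ0.le (by linarith : (0:ℝ) ≤ k + e)]
  set σ := Real.sqrt ((τ * s) ^ 2 + c) with hσdef
  have hσ0 : 0 ≤ σ := Real.sqrt_nonneg _
  have hσ2 : σ ^ 2 = (τ * s) ^ 2 + c := Real.sq_sqrt (by positivity)
  have hσs : |τ * s| ≤ σ := by
    rw [hσdef, ← Real.sqrt_sq_eq_abs]
    exact Real.sqrt_le_sqrt (by linarith)
  set u := (σ + τ * s) / 2 with hudef
  set v := (σ - τ * s) / 2 with hvdef
  have hu0 : 0 ≤ u := by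
    rw [hudef]; linarith [neg_abs_le (τ * s), hσs]
  have hv0 : 0 ≤ v := by
    rw [hvdef]; linarith [le_abs_self (τ * s), hσs]
  have huv : u * v = c / 4 := by
    rw [hudef, hvdef]; linear_combination hσ2 / 4
  have husum : u + v = σ := by rw [hudef, hvdef]; ring
  have hmw : τ ^ 2 * ‖m‖ ^ 2 = 4 * (u * v) * w := by
    rw [huv, hcdef, hwdef]
    linear_combination (-(τ ^ 2) / 4) * hk2
  -- the complex coordinates
  set z3 : ℂ := ((Real.sqrt w : ℝ) : ℂ) with hz3def
  set z2 : ℂ := ((Real.sqrt v : ℝ) : ℂ) with hz2def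
  set z1 : ℂ := if v * w = 0 then ((Real.sqrt u : ℝ) : ℂ)
    else (τ : ℂ) * m / (2 * ((Real.sqrt v : ℝ) : ℂ) * ((Real.sqrt w : ℝ) : ℂ)) with hz1def
  have hnz3 : ‖z3‖ ^ 2 = w := by
    rw [hz3def, Complex.norm_real, Real.norm_eq_abs,
      abs_of_nonneg (Real.sqrt_nonneg w), Real.sq_sqrt hw0]
  have hnz2 : ‖z2‖ ^ 2 = v := by
    rw [hz2def, Complex.norm_real, Real.norm_eq_abs,
      abs_of_nonneg (Real.sqrt_nonneg v), Real.sq_sqrt hv0]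
  have hnz1 : ‖z1‖ ^ 2 = u := by
    rw [hz1def]
    split_ifs with hvw
    · rw [Complex.norm_real, Real.norm_eq_abs,
        abs_of_nonneg (Real.sqrt_nonneg u), Real.sq_sqrt hu0]
    · have hv' : 0 < v := lt_of_le_of_ne hv0 (fun hh => hvw (by rw [← hh]; ring))
      have hw' : 0 < w := by
        rcases lt_or_eq_of_le hw0 with hh | hh
        · exact hh
        · exact absurd (by rw [← hh]; ring) hvw
      rw [norm_div, div_pow]
      have hnum : ‖(τ : ℂ) * m‖ ^ 2 = τ ^ 2 * ‖m‖ ^ 2 := norm_ofReal_mul_sq τ hτ0.le m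
      have hden : ‖2 * ((Real.sqrt v : ℝ) : ℂ) * ((Real.sqrt w : ℝ) : ℂ)‖ ^ 2
          = 4 * (v * w) := by
        rw [norm_mul, norm_mul, RCLike.norm_two, Complex.norm_real, Complex.norm_real,
          Real.norm_eq_abs, Real.norm_eq_abs, abs_of_nonneg (Real.sqrt_nonneg v),
          abs_of_nonneg (Real.sqrt_nonneg w)]
        rw [mul_pow, mul_pow, Real.sq_sqrt hv0, Real.sq_sqrt hw0]
        ring
      rw [hnum, hden, hmw]
      have hv'' : v ≠ 0 := hv'.ne'
      have hw'' : w ≠ 0 := hw'.ne'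
      field_simp
  have hτm : ‖(τ : ℂ) * m‖ ^ 2 = 4 * (u * v) * w := by
    rw [norm_ofReal_mul_sq τ hτ0.le]; exact hmw
  have hprod : 2 * (z1 * z2 * z3) = (τ : ℂ) * m := by
    rw [hz1def, hz2def, hz3def]
    split_ifs with hvw
    · have hm0 : (τ : ℂ) * m = 0 := by
        have h2' : ‖(τ : ℂ) * m‖ ^ 2 = 0 := by
          rw [hτm]
          rcases mul_eq_zero.mp hvw with h | h <;> rw [h] <;> ring
        have := pow_eq_zero_iff (n := 2) (by norm_num) |>.mp h2'
        exact norm_eq_zero.mp this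
      rw [hm0]
      rcases mul_eq_zero.mp hvw with h | h
      · rw [h, Real.sqrt_zero]; simp
      · rw [h, Real.sqrt_zero]; simp
    · have hv' : 0 < v := lt_of_le_of_ne hv0 (fun hh => hvw (by rw [← hh]; ring))
      have hw' : 0 < w := by
        rcases lt_or_eq_of_le hw0 with hh | hh
        · exact hh
        · exact absurd (by rw [← hh]; ring) hvw
      have h1 : ((Real.sqrt v : ℝ) : ℂ) ≠ 0 :=
        Complex.ofReal_ne_zero.mpr (Real.sqrt_ne_zero'.mpr hv')
      have h2 : ((Real.sqrt w : ℝ) : ℂ) ≠ 0 :=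
        Complex.ofReal_ne_zero.mpr (Real.sqrt_ne_zero'.mpr hw')
      field_simp
  refine ⟨(τ * r, z1, z2, z3), ?_, τ, hτ0, ?_⟩
  · show (τ * r) ^ 2 + ‖z1‖ ^ 2 + ‖z2‖ ^ 2 + ‖z3‖ ^ 2 = 1
    rw [hnz1, hnz2, hnz3]
    linarith [hτeq', husum]
  · ext i
    fin_cases i
    · show τ * r = τ * y 0
      rfl
    · show ‖z1‖ ^ 2 - ‖z2‖ ^ 2 = τ * s
      rw [hnz1, hnz2, hudef, hvdef]; ring
    · show 4 * (‖z1‖ ^ 2 * ‖z2‖ ^ 2) - ‖z3‖ ^ 2 = τ * e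
      rw [hnz1, hnz2, hnz3]
      linear_combination 4 * huv + hcdef - hwdef
    · show (2 * (z1 * z2 * z3)).re = τ * y 3
      rw [hprod, Complex.re_ofReal_mul]
    · show (2 * (z1 * z2 * z3)).im = τ * y 4
      rw [hprod, Complex.im_ofReal_mul]

end S6Pf

end

open S6Pf in
/-- `S⁶/T² ≅ S⁴` for the complexity-one subtorus `{t₁t₂t₃ = 1}`. -/
theorem S6_quotient_T2_homeomorphic_S4 :
    Nonempty (Quot rel1 ≃ₜ Metric.sphere (0 : EuclideanSpace ℝ (Fin 5)) 1) := by
  -- compactness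
  have hcomp : IsCompact {p : ℝ × ℂ × ℂ × ℂ |
      p.1 ^ 2 + ‖p.2.1‖ ^ 2 + ‖p.2.2.1‖ ^ 2 + ‖p.2.2.2‖ ^ 2 = 1} := by
    rw [Metric.isCompact_iff_isClosed_bounded]
    constructor
    · exact isClosed_eq (by fun_prop) continuous_const
    · rw [isBounded_iff_forall_norm_le]
      refine ⟨1, fun p hp => ?_⟩
      simp only [Set.mem_setOf_eq] at hp
      have h1 : |p.1| ≤ 1 := by
        nlinarith [sq_abs p.1, abs_nonneg p.1, sq_nonneg ‖p.2.1‖, sq_nonneg ‖p.2.2.1‖,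
          sq_nonneg ‖p.2.2.2‖]
      have h2 : ‖p.2.1‖ ≤ 1 := by
        nlinarith [sq_nonneg p.1, norm_nonneg p.2.1, sq_nonneg ‖p.2.2.1‖, sq_nonneg ‖p.2.2.2‖]
      have h3 : ‖p.2.2.1‖ ≤ 1 := by
        nlinarith [sq_nonneg p.1, norm_nonneg p.2.2.1, sq_nonneg ‖p.2.1‖, sq_nonneg ‖p.2.2.2‖]
      have h4 : ‖p.2.2.2‖ ≤ 1 := by
        nlinarith [sq_nonneg p.1, norm_nonneg p.2.2.2, sq_nonneg ‖p.2.1‖, sq_nonneg ‖p.2.2.1‖]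
      calc ‖p‖ = max ‖p.1‖ ‖p.2‖ := rfl
        _ ≤ 1 := by
          apply max_le
          · rwa [Real.norm_eq_abs]
          · calc ‖p.2‖ = max ‖p.2.1‖ ‖p.2.2‖ := rfl
              _ ≤ 1 := by
                apply max_le h2
                calc ‖p.2.2‖ = max ‖p.2.2.1‖ ‖p.2.2.2‖ := rfl
                  _ ≤ 1 := max_le h3 h4
  haveI : CompactSpace S6 := isCompact_iff_compactSpace.mp hcomp
  -- the invariant map respects the relation
  have hinv : ∀ a b : S6, rel1 a b → Fmap a = Fmap b := by
    intro a b hab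
    obtain ⟨hr, t₁, t₂, t₃, h1, h2, h3, h4, e1, e2, e3⟩ := hab
    have hprod : b.1.2.1 * b.1.2.2.1 * b.1.2.2.2 = a.1.2.1 * a.1.2.2.1 * a.1.2.2.2 := by
      rw [e1, e2, e3, show t₁ * a.1.2.1 * (t₂ * a.1.2.2.1) * (t₃ * a.1.2.2.2)
        = t₁ * t₂ * t₃ * (a.1.2.1 * a.1.2.2.1 * a.1.2.2.2) from by ring, h4, one_mul]
    have hP : P b.1 = P a.1 := by
      ext i
      fin_cases i
      · exact hr
      · show ‖b.1.2.1‖ ^ 2 - ‖b.1.2.2.1‖ ^ 2 = ‖a.1.2.1‖ ^ 2 - ‖a.1.2.2.1‖ ^ 2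
        rw [e1, e2, norm_mul, norm_mul, h1, h2]; ring
      · show 4 * (‖b.1.2.1‖ ^ 2 * ‖b.1.2.2.1‖ ^ 2) - ‖b.1.2.2.2‖ ^ 2
          = 4 * (‖a.1.2.1‖ ^ 2 * ‖a.1.2.2.1‖ ^ 2) - ‖a.1.2.2.2‖ ^ 2
        rw [e1, e2, e3, norm_mul, norm_mul, norm_mul, h1, h2, h3]; ring
      · show (2 * (b.1.2.1 * b.1.2.2.1 * b.1.2.2.2)).re
          = (2 * (a.1.2.1 * a.1.2.2.1 * a.1.2.2.2)).re
        rw [hprod]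
      · show (2 * (b.1.2.1 * b.1.2.2.1 * b.1.2.2.2)).im
          = (2 * (a.1.2.1 * a.1.2.2.1 * a.1.2.2.2)).im
        rw [hprod]
    exact (Subtype.ext (by show _ • _ = _ • _; rw [hP])).symm
  set f : Quot rel1 → Metric.sphere (0 : EuclideanSpace ℝ (Fin 5)) 1 :=
    Quot.lift Fmap hinv with hfdef
  have hfcont : Continuous f := continuous_quot_lift hinv continuous_Fmap
  -- injectivity on representatives
  have inj : ∀ a b : S6, Fmap a = Fmap b → Quot.mk rel1 a = Quot.mk rel1 b := by
    intro a b h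
    have hval : ‖P a.1‖⁻¹ • P a.1 = ‖P b.1‖⁻¹ • P b.1 := congrArg Subtype.val h
    have hna : 0 < ‖P a.1‖ := norm_pos_iff.mpr (P_ne_zero a.2)
    have hnb : 0 < ‖P b.1‖ := norm_pos_iff.mpr (P_ne_zero b.2)
    set τ := ‖P b.1‖ * ‖P a.1‖⁻¹ with hτdef
    have hτpos : 0 < τ := mul_pos hnb (inv_pos.mpr hna)
    have hb : P b.1 = τ • P a.1 := by
      calc P b.1 = ‖P b.1‖ • (‖P b.1‖⁻¹ • P b.1) := by
            rw [smul_smul, mul_inv_cancel₀ hnb.ne', one_smul]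
        _ = ‖P b.1‖ • (‖P a.1‖⁻¹ • P a.1) := by rw [hval]
        _ = τ • P a.1 := by rw [smul_smul]
    have hPeq : P b.1 = P a.1 := by
      rcases le_or_gt 1 τ with hτ | hτ
      · exact P_eq_of_smul a.2 b.2 hτ hb
      · have hτ' : (1:ℝ) ≤ τ⁻¹ := by
          rw [le_inv_comm₀ one_pos hτpos]
          simpa using hτ.le
        have ha : P a.1 = τ⁻¹ • P b.1 := by
          rw [hb, smul_smul, inv_mul_cancel₀ hτpos.ne', one_smul]
        exact (P_eq_of_smul b.2 a.2 hτ' ha).symm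
    obtain ⟨hr, t⟩ := rel_of_P_eq a.2 b.2 hPeq
    exact Quot.sound ⟨hr, t⟩
  have hbij : Function.Bijective f := by
    constructor
    · intro q1 q2
      induction q1 using Quot.ind with | _ a =>
      induction q2 using Quot.ind with | _ b =>
      exact fun h => inj a b h
    · intro q
      obtain ⟨x, hx, τ, hτ0, hPx⟩ := surj q.1 (mem_sphere_zero_iff_norm.mp q.2)
      refine ⟨Quot.mk rel1 ⟨x, hx⟩, ?_⟩
      show Fmap ⟨x, hx⟩ = q
      apply Subtype.ext
      show ‖P x‖⁻¹ • P x = q.1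
      have hq1 : ‖(q : EuclideanSpace ℝ (Fin 5))‖ = 1 := mem_sphere_zero_iff_norm.mp q.2
      rw [hPx, norm_smul, Real.norm_eq_abs, abs_of_pos hτ0, hq1, mul_one, smul_smul,
        inv_mul_cancel₀ hτ0.ne', one_smul]
  have hEcont : Continuous ⇑(Equiv.ofBijective f hbij) := hfcont
  exact ⟨hEcont.homeoOfEquivCompactToT2⟩
end

section
/- Fix an integer n ≥ 1. Let Y = {A ∈ Mat_{n×n}(ℝ) : ‖A‖ = 1} be the sphere of real n×n matrices of Frobenius norm 1, and define A ~ B iff there exists Q ∈ O(n) with B = Q·A. Then the quotient space Y/~ is homeomorphic to the closed ball of dimension (n² + n − 2)/2. -/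
open Matrix Module

namespace YnnAux

variable {n : ℕ}

abbrev Mtx (n : ℕ) := Matrix (Fin n) (Fin n) ℝ


/-! ### The orthogonal factor lemma -/

lemma exists_orth (A B : Mtx n) (h : Aᵀ * A = Bᵀ * B) :
    ∃ Q : Mtx n, Qᵀ * Q = 1 ∧ B = Q * A := by
  classical
  set fA := Matrix.toEuclideanLin A with hfA
  set fB := Matrix.toEuclideanLin B with hfB
  have hmul : ∀ (M N : Mtx n) (v : EuclideanSpace ℝ (Fin n)),
      Matrix.toEuclideanLin (M * N) v = Matrix.toEuclideanLin M (Matrix.toEuclideanLin N v) := by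
    intro M N v
    simp [Matrix.toEuclideanLin_apply, Matrix.mulVec_mulVec]
  have hadj : ∀ (M : Mtx n),
      Matrix.toEuclideanLin Mᵀ = LinearMap.adjoint (Matrix.toEuclideanLin M) := by
    intro M
    rw [← Matrix.conjTranspose_eq_transpose_of_trivial,
      Matrix.toEuclideanLin_conjTranspose_eq_adjoint]
  have hinner : ∀ x y : EuclideanSpace ℝ (Fin n),
      (inner ℝ (fA x) (fA y) : ℝ) = inner ℝ (fB x) (fB y) := by
    intro x y
    have h1 : (inner ℝ (fA x) (fA y) : ℝ) = inner ℝ x (Matrix.toEuclideanLin (Aᵀ * A) y) := by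
      rw [hmul, hadj, LinearMap.adjoint_inner_right]
    have h2 : (inner ℝ (fB x) (fB y) : ℝ) = inner ℝ x (Matrix.toEuclideanLin (Bᵀ * B) y) := by
      rw [hmul, hadj, LinearMap.adjoint_inner_right]
    rw [h1, h2, h]
  have hnorm : ∀ x : EuclideanSpace ℝ (Fin n), ‖fA x‖ = ‖fB x‖ := by
    intro x
    rw [← Real.sqrt_sq (norm_nonneg (fA x)), ← Real.sqrt_sq (norm_nonneg (fB x)),
      ← real_inner_self_eq_norm_sq, ← real_inner_self_eq_norm_sq, hinner]
  have hker : LinearMap.ker fA ≤ LinearMap.ker fB := by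
    intro x hx
    rw [LinearMap.mem_ker] at hx ⊢
    have := hnorm x
    rw [hx, norm_zero] at this
    exact norm_eq_zero.mp this.symm
  set g : (EuclideanSpace ℝ (Fin n) ⧸ LinearMap.ker fA) →ₗ[ℝ] EuclideanSpace ℝ (Fin n) :=
    (LinearMap.ker fA).liftQ fB hker with hg
  set eqv := LinearMap.quotKerEquivRange fA with heqv
  set L0 : LinearMap.range fA →ₗ[ℝ] EuclideanSpace ℝ (Fin n) :=
    g ∘ₗ eqv.symm.toLinearMap with hL0
  have hkey : ∀ x : EuclideanSpace ℝ (Fin n),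
      L0 ⟨fA x, LinearMap.mem_range_self _ x⟩ = fB x := by
    intro x
    have : eqv.symm ⟨fA x, LinearMap.mem_range_self _ x⟩ = Submodule.Quotient.mk x := by
      rw [LinearEquiv.symm_apply_eq]
      exact Subtype.ext (LinearMap.quotKerEquivRange_apply_mk fA x).symm
    simp only [hL0, LinearMap.comp_apply, LinearEquiv.coe_toLinearMap, this]
    simp [hg]
  set L : LinearMap.range fA →ₗᵢ[ℝ] EuclideanSpace ℝ (Fin n) :=
    ⟨L0, by
      rintro ⟨-, x, rfl⟩
      rw [hkey x]
      simpa using (hnorm x).symm⟩ with hL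
  set Q' := L.extend with hQ'
  have hQ'app : ∀ x : EuclideanSpace ℝ (Fin n), Q' (fA x) = fB x := by
    intro x
    have := LinearIsometry.extend_apply L ⟨fA x, LinearMap.mem_range_self _ x⟩
    rw [this, hL]
    exact hkey x
  set Q := Matrix.toEuclideanLin.symm Q'.toLinearMap with hQ
  have hQlin : Matrix.toEuclideanLin Q = Q'.toLinearMap := by simp [hQ]
  refine ⟨Q, ?_, ?_⟩
  · apply Matrix.toEuclideanLin.injective
    apply LinearMap.ext
    intro v
    rw [hmul]
    have h1 : Matrix.toEuclideanLin Qᵀ = LinearMap.adjoint (Matrix.toEuclideanLin Q) := hadj Q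
    rw [h1, hQlin]
    apply ext_inner_left ℝ
    intro w
    rw [LinearMap.adjoint_inner_right]
    have hv : (Q'.toLinearMap) v = Q' v := rfl
    have hw : (Q'.toLinearMap) w = Q' w := rfl
    rw [hv, hw, Q'.inner_map_map]
    simp [Matrix.toEuclideanLin_apply, Matrix.one_mulVec]
  · apply Matrix.toEuclideanLin.injective
    apply LinearMap.ext
    intro v
    rw [hmul, hQlin]
    exact (hQ'app v).symm

/-! ### The set `K` and the quotient map -/

lemma trace_transpose_mul (A : Mtx n) : (Aᵀ * A).trace = ∑ i, ∑ j, A i j ^ 2 := by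
  rw [Matrix.trace]
  simp only [Matrix.diag, Matrix.mul_apply, Matrix.transpose_apply, sq]
  exact Finset.sum_comm

def K (n : ℕ) : Set (Mtx n) := {P | P.PosSemidef ∧ P.trace = 1}

abbrev Sph (n : ℕ) := {M : Mtx n // Real.sqrt (∑ i, ∑ j, M i j ^ 2) = 1}

abbrev Rel (n : ℕ) : Sph n → Sph n → Prop := fun A B =>
  ∃ Q : Mtx n, Qᵀ * Q = 1 ∧ B.1 = Q * A.1

lemma sum_sq_eq_one (A : Sph n) : ∑ i, ∑ j, A.1 i j ^ 2 = 1 := by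
  have h := A.2
  have h0 : 0 ≤ ∑ i, ∑ j, A.1 i j ^ 2 :=
    Finset.sum_nonneg fun i _ => Finset.sum_nonneg fun j _ => sq_nonneg _
  nlinarith [Real.sq_sqrt h0, h]

lemma mem_K (A : Sph n) : A.1ᵀ * A.1 ∈ K n := by
  constructor
  · have := Matrix.posSemidef_conjTranspose_mul_self A.1
    rwa [Matrix.conjTranspose_eq_transpose_of_trivial] at this
  · rw [trace_transpose_mul]; exact sum_sq_eq_one A

def f (A : Sph n) : K n := ⟨A.1ᵀ * A.1, mem_K A⟩

lemma f_resp (A B : Sph n) (h : Rel n A B) : f A = f B := by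
  obtain ⟨Q, hQ, hBA⟩ := h
  apply Subtype.ext
  show A.1ᵀ * A.1 = B.1ᵀ * B.1
  rw [hBA, Matrix.transpose_mul, Matrix.mul_assoc, ← Matrix.mul_assoc Qᵀ Q A.1, hQ,
    Matrix.one_mul]

noncomputable def F : Quot (Rel n) → K n := Quot.lift f f_resp

lemma F_injective : Function.Injective (F (n := n)) := by
  intro q1 q2
  induction q1 using Quot.ind with | _ A =>
  induction q2 using Quot.ind with | _ B =>
  intro hFE
  have h : A.1ᵀ * A.1 = B.1ᵀ * B.1 := congrArg Subtype.val hFE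
  exact Quot.sound (exists_orth A.1 B.1 h)

open scoped MatrixOrder in
lemma F_surjective : Function.Surjective (F (n := n)) := by
  rintro ⟨P, hP, htr⟩
  classical
  set A := CFC.sqrt P with hA
  have hP0 : 0 ≤ P := Matrix.nonneg_iff_posSemidef.mpr hP
  have hpsd : A.PosSemidef := Matrix.nonneg_iff_posSemidef.mp (CFC.sqrt_nonneg P)
  have hsym : Aᵀ = A := by
    rw [← Matrix.conjTranspose_eq_transpose_of_trivial]; exact hpsd.1
  have hAA : Aᵀ * A = P := by rw [hsym]; exact CFC.sqrt_mul_sqrt_self P hP0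
  have hAsph : Real.sqrt (∑ i, ∑ j, A i j ^ 2) = 1 := by
    rw [← trace_transpose_mul, hAA, htr, Real.sqrt_one]
  exact ⟨Quot.mk _ ⟨A, hAsph⟩, Subtype.ext hAA⟩

lemma cont_entry (i j : Fin n) : Continuous (fun M : Mtx n => M i j) :=
  (continuous_apply j).comp (continuous_apply i)

lemma F_continuous : Continuous (F (n := n)) := by
  apply continuous_quot_lift
  apply Continuous.subtype_mk
  exact (continuous_subtype_val.matrix_transpose).matrix_mul continuous_subtype_val

/-! ### Compactness -/

lemma isCompact_cube :
    IsCompact ((Set.univ.pi fun _ : Fin n => Set.univ.pi fun _ : Fin n => Set.Icc (-1:ℝ) 1) :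
      Set (Mtx n)) :=
  isCompact_univ_pi fun _ => isCompact_univ_pi fun _ => isCompact_Icc

lemma isCompact_sphere_set :
    IsCompact {M : Mtx n | Real.sqrt (∑ i, ∑ j, M i j ^ 2) = 1} := by
  have hcont : Continuous (fun M : Mtx n => Real.sqrt (∑ i, ∑ j, M i j ^ 2)) := by
    apply Real.continuous_sqrt.comp
    exact continuous_finset_sum _ fun i _ =>
      continuous_finset_sum _ fun j _ => (cont_entry i j).pow 2
  have hclosed : IsClosed {M : Mtx n | Real.sqrt (∑ i, ∑ j, M i j ^ 2) = 1} :=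
    isClosed_eq hcont continuous_const
  apply isCompact_cube.of_isClosed_subset hclosed
  intro M hM
  have h0 : (0:ℝ) ≤ ∑ i, ∑ j, M i j ^ 2 :=
    Finset.sum_nonneg fun i _ => Finset.sum_nonneg fun j _ => sq_nonneg _
  have h1 : ∑ i, ∑ j, M i j ^ 2 = 1 := by
    have hM' : Real.sqrt (∑ i, ∑ j, M i j ^ 2) = 1 := hM
    rw [← Real.sq_sqrt h0, hM', one_pow]
  rw [Set.mem_univ_pi]
  intro i
  rw [Set.mem_univ_pi]
  intro j
  have hle : M i j ^ 2 ≤ 1 := by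
    calc M i j ^ 2 ≤ ∑ j', M i j' ^ 2 :=
          Finset.single_le_sum (fun j' _ => sq_nonneg (M i j')) (Finset.mem_univ j)
      _ ≤ ∑ i', ∑ j', M i' j' ^ 2 :=
          Finset.single_le_sum
            (fun i' _ => Finset.sum_nonneg fun j' _ => sq_nonneg (M i' j'))
            (Finset.mem_univ i)
      _ = 1 := h1
  constructor <;> nlinarith [sq_nonneg (M i j)]

lemma cont_quad (x : Fin n → ℝ) :
    Continuous (fun M : Mtx n => x ⬝ᵥ (M *ᵥ x)) := by
  simp only [dotProduct, Matrix.mulVec]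
  exact continuous_finset_sum _ fun i _ => continuous_const.mul
    (continuous_finset_sum _ fun j _ => ((cont_entry i j).mul continuous_const))

lemma isClosed_K : IsClosed (K n) := by
  have h1 : IsClosed {P : Mtx n | Pᵀ = P} := by
    apply isClosed_eq
    · exact continuous_pi fun i => continuous_pi fun j => cont_entry j i
    · exact continuous_id
  have h2 : IsClosed {P : Mtx n | ∀ x : Fin n → ℝ, 0 ≤ x ⬝ᵥ (P *ᵥ x)} := by
    have heq : {P : Mtx n | ∀ x : Fin n → ℝ, 0 ≤ x ⬝ᵥ (P *ᵥ x)} =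
        ⋂ x : Fin n → ℝ, {P : Mtx n | 0 ≤ x ⬝ᵥ (P *ᵥ x)} := by
      ext P; simp
    rw [heq]
    exact isClosed_iInter fun x => isClosed_le continuous_const (cont_quad x)
  have h3 : IsClosed {P : Mtx n | P.trace = 1} := by
    apply isClosed_eq _ continuous_const
    exact continuous_finset_sum _ fun i _ => cont_entry i i
  have hK : K n = ({P : Mtx n | Pᵀ = P} ∩ {P | ∀ x : Fin n → ℝ, 0 ≤ x ⬝ᵥ (P *ᵥ x)})
      ∩ {P : Mtx n | P.trace = 1} := by
    ext P
    simp only [K, Set.mem_setOf_eq, Set.mem_inter_iff]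
    constructor
    · rintro ⟨⟨hH, hq⟩, htr⟩
      refine ⟨⟨?_, fun x => by simpa using (Matrix.posSemidef_iff_dotProduct_mulVec.mp ⟨hH, hq⟩).2 x⟩, htr⟩
      rw [← Matrix.conjTranspose_eq_transpose_of_trivial]; exact hH
    · rintro ⟨⟨hsym, hq⟩, htr⟩
      refine ⟨Matrix.posSemidef_iff_dotProduct_mulVec.mpr ⟨?_, fun x => by simpa using hq x⟩, htr⟩
      rw [Matrix.IsHermitian, Matrix.conjTranspose_eq_transpose_of_trivial]; exact hsym
  rw [hK]
  exact (h1.inter h2).inter h3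

lemma single_quad (P : Mtx n) (i j : Fin n) (a b : ℝ) :
    (Pi.single i a + Pi.single j b) ⬝ᵥ (P *ᵥ (Pi.single i a + Pi.single j b)) =
      a * P i i * a + a * P i j * b + b * P j i * a + b * P j j * b := by
  simp only [add_dotProduct, Matrix.mulVec_add, dotProduct_add,
    Matrix.mulVec_single, single_dotProduct, dotProduct_single, Pi.add_apply, Pi.smul_apply,
    Matrix.col_apply, op_smul_eq_mul]
  ring

lemma K_entry_bound {P : Mtx n} (hP : P ∈ K n) (i j : Fin n) :
    P i j ∈ Set.Icc (-1:ℝ) 1 := by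
  obtain ⟨⟨hH, hq⟩, htr⟩ := hP
  have hsym : ∀ a b, P a b = P b a := by
    intro a b
    have hPt : Pᵀ = P := by
      rw [← Matrix.conjTranspose_eq_transpose_of_trivial]; exact hH
    simpa using (congrFun (congrFun hPt a) b).symm
  have hq' : ∀ x : Fin n → ℝ, 0 ≤ x ⬝ᵥ (P *ᵥ x) := fun x => by simpa using (Matrix.posSemidef_iff_dotProduct_mulVec.mp ⟨hH, hq⟩).2 x
  have hdiag : ∀ a, 0 ≤ P a a := by
    intro a
    have h := hq' (Pi.single a 1 + Pi.single a 0)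
    rw [single_quad] at h
    simpa using h
  have hdle : ∀ a, P a a ≤ 1 := by
    intro a
    calc P a a ≤ ∑ k, P k k :=
          Finset.single_le_sum (fun k _ => hdiag k) (Finset.mem_univ a)
      _ = 1 := htr
  have h1 := hq' (Pi.single i 1 + Pi.single j 1)
  have h2 := hq' (Pi.single i 1 + Pi.single j (-1))
  rw [single_quad] at h1 h2
  constructor <;> nlinarith [hdle i, hdle j, hdiag i, hdiag j, hsym i j]

lemma isCompact_K : IsCompact (K n) := by
  apply isCompact_cube.of_isClosed_subset isClosed_K
  intro P hP
  rw [Set.mem_univ_pi]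
  intro i
  rw [Set.mem_univ_pi]
  intro j
  exact K_entry_bound hP i j

/-! ### Symmetric matrices and dimension count -/

def Sym (n : ℕ) : Submodule ℝ (Mtx n) where
  carrier := {M | Mᵀ = M}
  add_mem' := by
    intro a b ha hb
    simp only [Set.mem_setOf_eq] at *
    rw [Matrix.transpose_add, ha, hb]
  zero_mem' := by simp
  smul_mem' := by
    intro c a ha
    simp only [Set.mem_setOf_eq] at *
    rw [Matrix.transpose_smul, ha]

abbrev Idx (n : ℕ) := {p : Fin n × Fin n // p.1 ≤ p.2}

noncomputable def T : ↥(Sym n) →ₗ[ℝ] (Idx n → ℝ) where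
  toFun M := fun p => M.1 p.1.1 p.1.2
  map_add' := fun _ _ => rfl
  map_smul' := fun _ _ => rfl

lemma T_bijective : Function.Bijective (T (n := n)) := by
  constructor
  · intro M N h
    apply Subtype.ext
    ext i j
    rcases le_total i j with hij | hij
    · exact congrFun h ⟨(i, j), hij⟩
    · have hM : M.1 i j = M.1 j i := (congrFun (congrFun M.2 i) j).symm
      have hN : N.1 i j = N.1 j i := (congrFun (congrFun N.2 i) j).symm
      rw [hM, hN]
      exact congrFun h ⟨(j, i), hij⟩
  · intro g
    classical
    refine ⟨⟨Matrix.of fun i j => if h : i ≤ j then g ⟨(i, j), h⟩ else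
      g ⟨(j, i), le_of_not_ge h⟩, ?_⟩, ?_⟩
    · ext i j
      simp only [Matrix.transpose_apply, Matrix.of_apply]
      rcases le_total i j with hij | hij
      · rcases eq_or_lt_of_le hij with rfl | hlt
        · rfl
        · rw [dif_neg (not_le_of_gt hlt), dif_pos hij]
      · rcases eq_or_lt_of_le hij with rfl | hlt
        · rfl
        · rw [dif_pos hij, dif_neg (not_le_of_gt hlt)]
    · funext p
      obtain ⟨⟨i, j⟩, hij⟩ := p
      show (if h : i ≤ j then g ⟨(i, j), h⟩ else g ⟨(j, i), le_of_not_ge h⟩) = _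
      rw [dif_pos hij]

lemma card_Idx : Fintype.card (Idx n) * 2 = n * (n + 1) := by
  classical
  have e1 : Idx n ≃ Σ i : Fin n, {j : Fin n // i ≤ j} :=
    Equiv.subtypeProdEquivSigmaSubtype _
  rw [Fintype.card_congr e1, Fintype.card_sigma]
  have hc : ∀ i : Fin n, Fintype.card {j : Fin n // i ≤ j} = n - i := by
    intro i
    have hcc : Fintype.card {j : Fin n // i ≤ j} = Fintype.card (Set.Ici i) :=
      Fintype.card_congr (Equiv.refl _)
    rw [hcc, ← Set.toFinset_card, Set.toFinset_Ici, Fin.card_Ici]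
  simp only [hc]
  rw [Fin.sum_univ_eq_sum_range (fun i => n - i) n]
  have hrefl := Finset.sum_range_reflect (fun i => n - i) n
  rw [← hrefl]
  have hcong : ∀ j ∈ Finset.range n, n - (n - 1 - j) = j + 1 := by
    intro j hj
    rw [Finset.mem_range] at hj
    omega
  rw [Finset.sum_congr rfl hcong]
  have hshift : ∑ j ∈ Finset.range n, (j + 1) = ∑ i ∈ Finset.range (n + 1), i := by
    rw [Finset.sum_range_succ' (fun i => i) n]
    simp
  rw [hshift, Finset.sum_range_id_mul_two (n + 1)]
  simp [Nat.mul_comm]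

lemma finrank_Sym : finrank ℝ ↥(Sym n) * 2 = n * (n + 1) := by
  classical
  have e := LinearEquiv.ofBijective (T (n := n)) T_bijective
  rw [e.finrank_eq, Module.finrank_pi, card_Idx]

noncomputable def trS (n : ℕ) : ↥(Sym n) →ₗ[ℝ] ℝ :=
  (Matrix.traceLinearMap (Fin n) ℝ ℝ).comp (Sym n).subtype

noncomputable def W (n : ℕ) : Submodule ℝ ↥(Sym n) := LinearMap.ker (trS n)

noncomputable def cS (n : ℕ) : ↥(Sym n) :=
  ⟨(n : ℝ)⁻¹ • (1 : Mtx n), by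
    show ((n : ℝ)⁻¹ • (1 : Mtx n))ᵀ = (n : ℝ)⁻¹ • (1 : Mtx n)
    rw [Matrix.transpose_smul, Matrix.transpose_one]⟩

lemma trace_cS (hn : 1 ≤ n) : trS n (cS n) = 1 := by
  have hne : (n : ℝ) ≠ 0 := Nat.cast_ne_zero.mpr (by omega)
  simp [trS, cS, Matrix.trace_smul, Matrix.trace_one, hne]

lemma finrank_W (hn : 1 ≤ n) : (finrank ℝ ↥(W n) + 1) * 2 = n * (n + 1) := by
  have hsurj : Function.Surjective (trS n) := by
    intro r
    refine ⟨r • cS n, ?_⟩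
    rw [_root_.map_smul, trace_cS hn, smul_eq_mul, mul_one]
  have hrn := LinearMap.finrank_range_add_finrank_ker (trS n)
  rw [LinearMap.range_eq_top.mpr hsurj, finrank_top, Module.finrank_self] at hrn
  rw [← finrank_Sym (n := n)]
  unfold W
  omega

lemma finrank_W' (hn : 1 ≤ n) : finrank ℝ ↥(W n) = (n ^ 2 + n - 2) / 2 := by
  have h := finrank_W (n := n) hn
  have hsq : n ^ 2 = n * n := sq n
  have hexp : n * (n + 1) = n * n + n := by ring
  rw [hexp] at h
  rw [hsq]
  omega


/-! ### The slice K0 inside W -/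

lemma hermitian_of_symm {M : Mtx n} (h : Mᵀ = M) : M.IsHermitian := by
  rw [Matrix.IsHermitian, Matrix.conjTranspose_eq_transpose_of_trivial]; exact h

lemma psd_smul {M : Mtx n} (hM : M.PosSemidef) {a : ℝ} (ha : 0 ≤ a) : (a • M).PosSemidef := by
  rw [Matrix.posSemidef_iff_dotProduct_mulVec]
  constructor
  · apply hermitian_of_symm
    rw [Matrix.transpose_smul, ← Matrix.conjTranspose_eq_transpose_of_trivial, hM.1]
  · intro x
    have h2 := hM.dotProduct_mulVec_nonneg x
    rw [Matrix.smul_mulVec, dotProduct_smul]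
    exact smul_nonneg ha h2

lemma psd_cS : ((cS n).1).PosSemidef := by
  have h1 : (1 : Mtx n).PosSemidef := Matrix.PosSemidef.one
  exact psd_smul h1 (inv_nonneg.mpr (Nat.cast_nonneg n))

def K0 (n : ℕ) : Set ↥(W n) := {w | ((cS n).1 + w.1.1).PosSemidef}

lemma convex_K0 : Convex ℝ (K0 n) := by
  intro w1 h1 w2 h2 a b ha hb hab
  show ((cS n).1 + (a • w1 + b • w2 : ↥(W n)).1.1).PosSemidef
  have hval2 : (a • w1 + b • w2 : ↥(W n)).1.1 = a • w1.1.1 + b • w2.1.1 := rfl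
  rw [hval2]
  have key : (cS n).1 + (a • w1.1.1 + b • w2.1.1)
      = a • ((cS n).1 + w1.1.1) + b • ((cS n).1 + w2.1.1) := by
    conv_lhs => rw [← one_smul ℝ ((cS n).1), ← hab, add_smul]
    rw [smul_add, smul_add]
    abel
  rw [key]
  exact (psd_smul h1 ha).add (psd_smul h2 hb)

lemma trace_cS' (hn : 1 ≤ n) : ((cS n).1).trace = 1 := trace_cS hn

lemma trace_mem_W (w : ↥(W n)) : (w.1.1).trace = 0 := w.2

noncomputable def homeo2K (hn : 1 ≤ n) : ↥(K n) ≃ₜ ↥(K0 n) where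
  toFun P := ⟨⟨⟨P.1 - (cS n).1, by
      have hsym : P.1ᵀ = P.1 := by
        rw [← Matrix.conjTranspose_eq_transpose_of_trivial]; exact P.2.1.1
      show (P.1 - (cS n).1)ᵀ = P.1 - (cS n).1
      rw [Matrix.transpose_sub, hsym, (cS n).2]⟩, LinearMap.mem_ker.mpr (by
      show (P.1 - (cS n).1).trace = 0
      rw [Matrix.trace_sub, P.2.2, trace_cS' hn, sub_self])⟩, by
      show ((cS n).1 + (P.1 - (cS n).1)).PosSemidef
      have hval : (cS n).1 + (P.1 - (cS n).1) = P.1 := by abel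
      rw [hval]; exact P.2.1⟩
  invFun w := ⟨(cS n).1 + w.1.1.1, w.2, by
      rw [Matrix.trace_add, trace_cS' hn, trace_mem_W w.1, add_zero]⟩
  left_inv P := by
    apply Subtype.ext
    show (cS n).1 + (P.1 - (cS n).1) = P.1
    abel
  right_inv w := by
    apply Subtype.ext
    apply Subtype.ext
    apply Subtype.ext
    show ((cS n).1 + w.1.1.1) - (cS n).1 = w.1.1.1
    abel
  continuous_toFun := by
    apply Continuous.subtype_mk
    apply Continuous.subtype_mk
    apply Continuous.subtype_mk
    exact continuous_subtype_val.sub continuous_const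
  continuous_invFun := by
    apply Continuous.subtype_mk
    exact continuous_const.add
      (continuous_subtype_val.comp (continuous_subtype_val.comp continuous_subtype_val))

lemma abs_prod_le (x : Fin n → ℝ) (i j : Fin n) :
    |x i| * |x j| ≤ ∑ k, x k ^ 2 := by
  have hi : x i ^ 2 ≤ ∑ k, x k ^ 2 :=
    Finset.single_le_sum (fun k _ => sq_nonneg (x k)) (Finset.mem_univ i)
  have hj : x j ^ 2 ≤ ∑ k, x k ^ 2 :=
    Finset.single_le_sum (fun k _ => sq_nonneg (x k)) (Finset.mem_univ j)
  nlinarith [sq_nonneg (|x i| - |x j|), sq_abs (x i), sq_abs (x j),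
    abs_nonneg (x i), abs_nonneg (x j)]

lemma quad_bound (M : Mtx n) (x : Fin n → ℝ) :
    |x ⬝ᵥ (M *ᵥ x)| ≤ (∑ i, ∑ j, |M i j|) * (∑ k, x k ^ 2) := by
  have hexp : x ⬝ᵥ (M *ᵥ x) = ∑ i, ∑ j, x i * (M i j * x j) := by
    simp only [dotProduct, Matrix.mulVec, Finset.mul_sum]
  rw [hexp, Finset.sum_mul]
  refine (Finset.abs_sum_le_sum_abs _ _).trans (Finset.sum_le_sum fun i _ => ?_)
  rw [Finset.sum_mul]
  refine (Finset.abs_sum_le_sum_abs _ _).trans (Finset.sum_le_sum fun j _ => ?_)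
  rw [abs_mul, abs_mul]
  have hp := abs_prod_le x i j
  have habs : (0:ℝ) ≤ |M i j| := abs_nonneg _
  nlinarith [abs_nonneg (x i), abs_nonneg (x j), mul_le_mul_of_nonneg_left hp habs]

lemma K0_mem_nhds (hn : 1 ≤ n) : K0 n ∈ nhds (0 : ↥(W n)) := by
  have hcont : Continuous (fun w : ↥(W n) => ∑ i, ∑ j, |w.1.1 i j|) := by
    refine continuous_finset_sum _ fun i _ => continuous_finset_sum _ fun j _ => ?_
    exact ((cont_entry i j).comp (continuous_subtype_val.comp continuous_subtype_val)).abs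
  have hopen : IsOpen {w : ↥(W n) | ∑ i, ∑ j, |w.1.1 i j| < (n:ℝ)⁻¹} :=
    isOpen_lt hcont continuous_const
  have h0mem : (0 : ↥(W n)) ∈ {w : ↥(W n) | ∑ i, ∑ j, |w.1.1 i j| < (n:ℝ)⁻¹} := by
    have hpos : (0:ℝ) < (n:ℝ)⁻¹ := by
      apply inv_pos.mpr
      exact_mod_cast Nat.lt_of_lt_of_le Nat.zero_lt_one hn
    show ∑ i, ∑ j, |(0 : ↥(W n)).1.1 i j| < (n:ℝ)⁻¹
    have hzero : ((0 : ↥(W n)).1.1 : Mtx n) = 0 := rfl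
    rw [hzero]
    simpa using hpos
  refine Filter.mem_of_superset (hopen.mem_nhds h0mem) ?_
  intro w hw
  have hw' : ∑ i, ∑ j, |w.1.1 i j| < (n:ℝ)⁻¹ := hw
  show ((cS n).1 + w.1.1).PosSemidef
  rw [Matrix.posSemidef_iff_dotProduct_mulVec]
  constructor
  · apply hermitian_of_symm
    rw [Matrix.transpose_add, (cS n).2, w.1.2]
  · intro x
    have hb := quad_bound w.1.1 x
    set S := ∑ k, x k ^ 2 with hS
    have hSnn : (0:ℝ) ≤ S := Finset.sum_nonneg fun k _ => sq_nonneg _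
    have hstar : star x = x := by
      funext k; simp
    have hquad : star x ⬝ᵥ (((cS n).1 + w.1.1) *ᵥ x)
        = (n:ℝ)⁻¹ * S + x ⬝ᵥ (w.1.1 *ᵥ x) := by
      rw [hstar, Matrix.add_mulVec, dotProduct_add]
      congr 1
      show x ⬝ᵥ (((n:ℝ)⁻¹ • (1:Mtx n)) *ᵥ x) = (n:ℝ)⁻¹ * S
      rw [Matrix.smul_mulVec, Matrix.one_mulVec, dotProduct_smul]
      have hxx : x ⬝ᵥ x = S := by
        simp [dotProduct, hS, sq]
      rw [hxx]
      rfl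
    rw [hquad]
    have h1 := (abs_le.mp hb).1
    nlinarith [mul_le_mul_of_nonneg_right hw'.le hSnn]

/-! ### Main assembly -/

set_option maxHeartbeats 1000000 in
set_option synthInstance.maxHeartbeats 400000 in
theorem main (n : ℕ) (hn : 1 ≤ n) :
    Nonempty (Quot (Rel n)
      ≃ₜ Metric.closedBall (0 : EuclideanSpace ℝ (Fin ((n ^ 2 + n - 2) / 2))) 1) := by
  classical
  haveI : CompactSpace (Sph n) := isCompact_iff_compactSpace.mp isCompact_sphere_set
  let E1 : Quot (Rel n) ≃ ↥(K n) := Equiv.ofBijective F ⟨F_injective, F_surjective⟩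
  have hE1 : Continuous (E1 : Quot (Rel n) → ↥(K n)) := F_continuous
  let homeo1 : Quot (Rel n) ≃ₜ ↥(K n) := hE1.homeoOfEquivCompactToT2
  let e : ↥(W n) ≃L[ℝ] EuclideanSpace ℝ (Fin ((n ^ 2 + n - 2) / 2)) :=
    ContinuousLinearEquiv.ofFinrankEq (𝕜 := ℝ) (E := ↥(W n))
      (F := EuclideanSpace ℝ (Fin ((n ^ 2 + n - 2) / 2)))
      ((finrank_W' hn).trans finrank_euclideanSpace_fin.symm)
  let h : ↥(W n) ≃ₜ EuclideanSpace ℝ (Fin ((n ^ 2 + n - 2) / 2)) := e.toHomeomorph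
  let K' : Set (EuclideanSpace ℝ (Fin ((n ^ 2 + n - 2) / 2))) := h '' K0 n
  have hKcomp : IsCompact (K0 n) := by
    haveI : CompactSpace ↥(K n) := isCompact_iff_compactSpace.mp isCompact_K
    haveI : CompactSpace ↥(K0 n) := (homeo2K hn).compactSpace
    exact isCompact_iff_compactSpace.mpr this
  have hK'comp : IsCompact K' := hKcomp.image h.continuous
  have hK'bdd : Bornology.IsBounded K' := hK'comp.isBounded
  have hK'conv : Convex ℝ K' := by
    exact (convex_K0 (n := n)).linear_image e.toLinearEquiv.toLinearMap
  have hK'int : (interior K').Nonempty := by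
    have h0 : (0 : ↥(W n)) ∈ interior (K0 n) :=
      mem_interior_iff_mem_nhds.mpr (K0_mem_nhds hn)
    refine ⟨h 0, ?_⟩
    rw [← h.image_interior (K0 n)]
    exact ⟨0, h0, rfl⟩
  obtain ⟨h2, -, hcl, -⟩ :=
    exists_homeomorph_image_interior_closure_frontier_eq_unitBall hK'conv hK'int hK'bdd
  have hK'closed : closure K' = K' := hK'comp.isClosed.closure_eq
  rw [hK'closed] at hcl
  let homeo3 : ↥(K0 n) ≃ₜ ↥K' := h.image (K0 n)
  let homeo4 : ↥K'
      ≃ₜ ↥(Metric.closedBall (0 : EuclideanSpace ℝ (Fin ((n ^ 2 + n - 2) / 2))) 1) :=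
    (h2.image K').trans (Homeomorph.setCongr hcl)
  exact ⟨homeo1.trans ((homeo2K hn).trans (homeo3.trans homeo4))⟩

end YnnAux

/-- Orbit space of the sphere of normalized `n×n` matrices by the left
`O(n)`-action is a closed ball of dimension `(n² + n - 2)/2`. -/
theorem Y_n_n_quotient_O_homeomorphic_ball (n : ℕ) (hn : 1 ≤ n) :
    Nonempty (Quot
      (fun A B : {M : Matrix (Fin n) (Fin n) ℝ //
          Real.sqrt (∑ i, ∑ j, M i j ^ 2) = 1} =>
        ∃ Q : Matrix (Fin n) (Fin n) ℝ, Qᵀ * Q = 1 ∧ B.1 = Q * A.1)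
      ≃ₜ Metric.closedBall (0 : EuclideanSpace ℝ (Fin ((n ^ 2 + n - 2) / 2))) 1) := by
  exact YnnAux.main n hn
end

section
/- Fix an integer n ≥ 1. Let Z = {A ∈ Mat_{n×n}(ℝ) : ‖A‖ = 1, det A ≥ 0}, and define A ~ B iff there exists Q ∈ SO(n) with B = Q·A. Then the quotient space Z/~ is homeomorphic to the closed ball of dimension (n² + n − 2)/2. -/
open Matrix Topology Bornology

variable {n : ℕ}

lemma star_eq_t (A : Matrix (Fin n) (Fin n) ℝ) : star A = Aᵀ := by
  rw [Matrix.star_eq_conjTranspose, Matrix.conjTranspose_eq_transpose_of_trivial]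

lemma psd_det_nonneg {P : Matrix (Fin n) (Fin n) ℝ} (hP : P.PosSemidef) : 0 ≤ P.det := by
  rw [hP.1.det_eq_prod_eigenvalues]
  exact Finset.prod_nonneg fun i _ => by simpa using hP.eigenvalues_nonneg i

open scoped MatrixOrder in
noncomputable def Matrix.PosSemidef.sqrt {P : Matrix (Fin n) (Fin n) ℝ} (_hP : P.PosSemidef) :
    Matrix (Fin n) (Fin n) ℝ := CFC.sqrt P

open scoped MatrixOrder in
lemma Matrix.PosSemidef.posSemidef_sqrt {P : Matrix (Fin n) (Fin n) ℝ} (hP : P.PosSemidef) :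
    hP.sqrt.PosSemidef := (CFC.sqrt_nonneg P).posSemidef

open scoped MatrixOrder in
lemma Matrix.PosSemidef.sqrt_mul_self {P : Matrix (Fin n) (Fin n) ℝ} (hP : P.PosSemidef) :
    hP.sqrt * hP.sqrt = P := CFC.sqrt_mul_sqrt_self P hP.nonneg

open scoped MatrixOrder in
lemma Matrix.PosSemidef.eq_of_sq_eq_sq {A B : Matrix (Fin n) (Fin n) ℝ} (hA : A.PosSemidef)
    (hB : B.PosSemidef) (h : A ^ 2 = B ^ 2) : A = B :=
  (CFC.sq_eq_sq_iff A B hA.nonneg hB.nonneg).mp h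

lemma polar (A P : Matrix (Fin n) (Fin n) ℝ) (hP : P.PosSemidef)
    (hAP : Aᵀ * A = P * P) (hdet : 0 ≤ A.det) :
    ∃ Q : Matrix (Fin n) (Fin n) ℝ, Qᵀ * Q = 1 ∧ Q.det = 1 ∧ A = Q * P := by
  classical
  have hM : (Aᵀ * A).PosSemidef := by
    have := Matrix.posSemidef_conjTranspose_mul_self A
    rwa [Matrix.conjTranspose_eq_transpose_of_trivial] at this
  set hH : (Aᵀ * A).IsHermitian := hM.1 with hHdef
  set U : Matrix (Fin n) (Fin n) ℝ := (hH.eigenvectorUnitary : Matrix (Fin n) (Fin n) ℝ) with hUdef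
  set lam : Fin n → ℝ := hH.eigenvalues with hlamdef
  have hU1 : Uᵀ * U = 1 := by
    rw [← star_eq_t]
    exact (Matrix.mem_unitaryGroup_iff').mp (hH.eigenvectorUnitary).2
  have hU2 : U * Uᵀ = 1 := by
    rw [← star_eq_t]
    exact (Matrix.mem_unitaryGroup_iff).mp (hH.eigenvectorUnitary).2
  have spec : Aᵀ * A = U * diagonal lam * Uᵀ := by
    have h := hH.spectral_theorem
    rw [Unitary.conjStarAlgAut_apply, star_eq_t] at h
    exact h
  set g : Fin n → ℝ := fun i => Real.sqrt (lam i) with hgdef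
  have hg2 : ∀ i, g i * g i = lam i := fun i =>
    Real.mul_self_sqrt (hM.eigenvalues_nonneg i)
  have hdiagpsd : (U * diagonal g * Uᵀ).PosSemidef := by
    rw [← star_eq_t, Matrix.star_eq_conjTranspose]
    exact PosSemidef.mul_mul_conjTranspose_same
      (posSemidef_diagonal_iff.mpr fun i => Real.sqrt_nonneg _) U
  have hPdiag : P = U * diagonal g * Uᵀ := by
    refine hP.eq_of_sq_eq_sq hdiagpsd ?_
    have h : (U * diagonal g * Uᵀ) ^ 2 = U * diagonal lam * Uᵀ := by
      rw [pow_two]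
      calc U * diagonal g * Uᵀ * (U * diagonal g * Uᵀ)
          = U * (diagonal g * ((Uᵀ * U) * diagonal g)) * Uᵀ := by noncomm_ring
        _ = U * diagonal lam * Uᵀ := by
            rw [hU1, one_mul, diagonal_mul_diagonal]
            rw [show (fun i => g i * g i) = lam from funext hg2]
    rw [h, pow_two, ← hAP]
    exact spec
  set B : Matrix (Fin n) (Fin n) ℝ := A * U with hBdef
  have hBtB : Bᵀ * B = diagonal lam := by
    have h : Bᵀ * B = Uᵀ * (Aᵀ * A) * U := by
      rw [hBdef, transpose_mul]; noncomm_ring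
    rw [h, spec]
    calc Uᵀ * (U * diagonal lam * Uᵀ) * U
        = (Uᵀ * U) * diagonal lam * (Uᵀ * U) := by noncomm_ring
      _ = diagonal lam := by rw [hU1]; simp
  have hcol : ∀ i j, (∑ k, B k i * B k j) = diagonal lam i j := by
    intro i j
    have h := congr_fun (congr_fun hBtB i) j
    rw [mul_apply] at h
    simpa [transpose_apply] using h
  have hBzero : ∀ j, lam j = 0 → ∀ k, B k j = 0 := by
    intro j hj k
    have h0 : (∑ k, B k j * B k j) = 0 := by rw [hcol, diagonal_apply_eq, hj]
    have h := Finset.sum_eq_zero_iff_of_nonneg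
      (fun k _ => mul_self_nonneg (B k j)) |>.mp h0 k (Finset.mem_univ k)
    exact mul_self_eq_zero.mp h
  set v : Fin n → EuclideanSpace ℝ (Fin n) :=
    fun i => (WithLp.equiv 2 (Fin n → ℝ)).symm fun k => (g i)⁻¹ * B k i with hvdef
  set s : Set (Fin n) := {i | lam i ≠ 0} with hsdef
  have hgpos : ∀ i ∈ s, 0 < g i := by
    intro i hi
    exact Real.sqrt_pos.mpr (lt_of_le_of_ne (hM.eigenvalues_nonneg i) (Ne.symm hi))
  have horth : Orthonormal ℝ (s.restrict v) := by
    rw [orthonormal_iff_ite]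
    rintro ⟨i, hi⟩ ⟨j, hj⟩
    have hinner : (inner ℝ (v i) (v j) : ℝ) = (g i)⁻¹ * (g j)⁻¹ * diagonal lam i j := by
      rw [PiLp.inner_apply, ← hcol i j]
      simp only [hvdef, WithLp.equiv_symm_apply, WithLp.ofLp_toLp, RCLike.inner_apply, starRingEnd_apply,
        star_trivial]
      rw [Finset.mul_sum]
      congr 1; funext k; ring
    by_cases hij : i = j
    · subst hij
      have he : (⟨i, hi⟩ : s) = ⟨i, hj⟩ := rfl
      rw [he, if_pos rfl]
      show inner ℝ (v i) (v i) = 1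
      rw [hinner, diagonal_apply_eq, ← hg2 i]
      have hgi := (hgpos i hi).ne'
      field_simp
    · have hne : (⟨i, hi⟩ : s) ≠ ⟨j, hj⟩ := by simp [Subtype.ext_iff, hij]
      rw [if_neg hne]
      show inner ℝ (v i) (v j) = 0
      rw [hinner, diagonal_apply_ne _ hij, mul_zero]
  obtain ⟨b, hb⟩ := horth.exists_orthonormalBasis_extension_of_card_eq (by simp)
  set V : Matrix (Fin n) (Fin n) ℝ := Matrix.of fun k i => b i k with hVdef
  have hV : Vᵀ * V = 1 := by
    ext i j
    rw [mul_apply]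
    have h := (orthonormal_iff_ite.mp b.orthonormal) i j
    rw [PiLp.inner_apply] at h
    simp only [RCLike.inner_apply, starRingEnd_apply, star_trivial] at h
    simp only [hVdef, transpose_apply, of_apply]
    exact (Finset.sum_congr rfl fun x _ => mul_comm _ _).trans (h.trans one_apply.symm)
  have hVD : V * diagonal g = B := by
    ext k j
    rw [mul_diagonal]
    by_cases hj : lam j = 0
    · have hgj : g j = 0 := by rw [hgdef]; simp [hj]
      rw [hgj, mul_zero, hBzero j hj k]
    · have hjs : j ∈ s := hj
      have hbj : b j = v j := hb j hjs
      simp only [hVdef, of_apply, hbj, hvdef, WithLp.equiv_symm_apply, WithLp.ofLp_toLp]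
      field_simp [(hgpos j hjs).ne']
  have hAeq : A = V * diagonal g * Uᵀ := by
    have h : B * Uᵀ = A := by rw [hBdef, mul_assoc, hU2, mul_one]
    rw [← h, hVD]
  have hQ0 : ∀ D : Matrix (Fin n) (Fin n) ℝ, Dᵀ = D → D * D = 1 → D * diagonal g = diagonal g →
      ((V * D * Uᵀ)ᵀ * (V * D * Uᵀ) = 1 ∧ A = (V * D * Uᵀ) * P) := by
    intro D hDt hDD hDg
    constructor
    · calc (V * D * Uᵀ)ᵀ * (V * D * Uᵀ) = U * (Dᵀ * (Vᵀ * V) * D) * Uᵀ := by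
            simp only [transpose_mul, transpose_transpose]; noncomm_ring
      _ = 1 := by rw [hV, hDt, mul_one, hDD, mul_one, hU2]
    · symm
      calc (V * D * Uᵀ) * P = V * ((D * (Uᵀ * U)) * diagonal g) * Uᵀ := by
            rw [hPdiag]; noncomm_ring
      _ = A := by rw [hU1, mul_one, hDg, ← hAeq]
  have hdV : ((V * Uᵀ).det) * ((V * Uᵀ).det) = 1 := by
    have h1 := (hQ0 1 transpose_one (one_mul 1) (one_mul _)).1
    rw [mul_one] at h1
    have h2 := congr_arg Matrix.det h1
    rwa [det_mul, det_transpose, det_one] at h2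
  rcases mul_self_eq_one_iff.mp hdV with hdet1 | hdetm1
  · refine ⟨V * Uᵀ, ?_, hdet1, ?_⟩
    · have h := (hQ0 1 transpose_one (one_mul 1) (one_mul _)).1
      rwa [mul_one] at h
    · have h := (hQ0 1 transpose_one (one_mul 1) (one_mul _)).2
      rwa [mul_one] at h
  · have hPdet : P.det = Finset.univ.prod g := by
      rw [hPdiag, det_mul, det_mul, det_diagonal]
      rw [mul_comm U.det, mul_assoc, mul_comm _ Uᵀ.det, ← det_mul, hU1, det_one]
      ring
    have hAdet : A.det = -P.det := by
      have h := (hQ0 1 transpose_one (one_mul 1) (one_mul _)).2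
      rw [mul_one] at h
      rw [h, det_mul, hdetm1]
      ring
    have hP0 : P.det = 0 := by
      have h1 : 0 ≤ P.det := psd_det_nonneg hP
      have h2 : P.det ≤ 0 := by rw [← neg_nonneg, ← hAdet]; exact hdet
      linarith
    obtain ⟨i0, _, hi0⟩ := Finset.prod_eq_zero_iff.mp (hPdet ▸ hP0)
    set D : Matrix (Fin n) (Fin n) ℝ := diagonal (fun i => if i = i0 then (-1:ℝ) else 1)
      with hDdef
    have hDt : Dᵀ = D := diagonal_transpose _
    have hDD : D * D = 1 := by
      rw [hDdef, diagonal_mul_diagonal]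
      have h : (fun i => (if i = i0 then (-1:ℝ) else 1) * (if i = i0 then (-1:ℝ) else 1))
          = fun _ => (1:ℝ) := by
        funext i; by_cases h : i = i0 <;> simp [h]
      rw [h, diagonal_one]
    have hDg : D * diagonal g = diagonal g := by
      rw [hDdef, diagonal_mul_diagonal]
      have h : (fun i => (if i = i0 then (-1:ℝ) else 1) * g i) = g := by
        funext i
        by_cases h : i = i0
        · subst h; simp [hgdef, hi0]
        · simp [h]
      rw [h]
    obtain ⟨hQQ, hQA⟩ := hQ0 D hDt hDD hDg
    refine ⟨V * D * Uᵀ, hQQ, ?_, hQA⟩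
    have hDdet : D.det = -1 := by
      rw [hDdef, det_diagonal]
      rw [Finset.prod_ite_eq' Finset.univ i0 (fun _ => (-1:ℝ))]
      simp
    have hVU : V.det * U.det = -1 := by
      rw [det_mul, det_transpose] at hdetm1
      exact hdetm1
    rw [det_mul, det_mul, hDdet, det_transpose]
    calc V.det * -1 * U.det = -(V.det * U.det) := by ring
    _ = 1 := by rw [hVU]; ring

lemma key {A B : Matrix (Fin n) (Fin n) ℝ} (hA : 0 ≤ A.det) (hB : 0 ≤ B.det)
    (h : Aᵀ * A = Bᵀ * B) :
    ∃ Q : Matrix (Fin n) (Fin n) ℝ, Qᵀ * Q = 1 ∧ Q.det = 1 ∧ B = Q * A := by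
  have hM : (Aᵀ * A).PosSemidef := by
    have := Matrix.posSemidef_conjTranspose_mul_self A
    rwa [Matrix.conjTranspose_eq_transpose_of_trivial] at this
  set P := hM.sqrt with hPdef
  have hPP : Aᵀ * A = P * P := hM.sqrt_mul_self.symm
  obtain ⟨Q1, hQ1, hd1, hA1⟩ := polar A P hM.posSemidef_sqrt hPP hA
  obtain ⟨Q2, hQ2, hd2, hB1⟩ := polar B P hM.posSemidef_sqrt (by rw [← h, hPP]) hB
  refine ⟨Q2 * Q1ᵀ, ?_, ?_, ?_⟩
  · have h11 : Q1 * Q1ᵀ = 1 := mul_eq_one_comm.mp hQ1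
    calc (Q2 * Q1ᵀ)ᵀ * (Q2 * Q1ᵀ) = Q1 * ((Q2ᵀ * Q2) * Q1ᵀ) := by
          simp only [transpose_mul, transpose_transpose]; noncomm_ring
    _ = 1 := by rw [hQ2, one_mul, h11]
  · rw [det_mul, det_transpose, hd2, hd1]; ring
  · rw [hB1, hA1]
    calc Q2 * P = Q2 * ((Q1ᵀ * Q1) * P) := by rw [hQ1, one_mul]
    _ = Q2 * Q1ᵀ * (Q1 * P) := by noncomm_ring

-- the sum-of-squares/trace identity
lemma trace_tmul (A : Matrix (Fin n) (Fin n) ℝ) :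
    (Aᵀ * A).trace = ∑ i, ∑ j, A i j ^ 2 := by
  rw [Matrix.trace]
  simp only [diag_apply, mul_apply, transpose_apply]
  rw [Finset.sum_comm]
  congr 1; funext i
  congr 1; funext j
  ring

abbrev Zset (n : ℕ) : Set (Matrix (Fin n) (Fin n) ℝ) :=
  {M | Real.sqrt (∑ i, ∑ j, M i j ^ 2) = 1 ∧ 0 ≤ M.det}

lemma mem_Zset_iff (M : Matrix (Fin n) (Fin n) ℝ) :
    M ∈ Zset n ↔ (∑ i, ∑ j, M i j ^ 2) = 1 ∧ 0 ≤ M.det := by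
  constructor
  · rintro ⟨h1, h2⟩
    refine ⟨?_, h2⟩
    have hnn : 0 ≤ ∑ i, ∑ j, M i j ^ 2 :=
      Finset.sum_nonneg fun i _ => Finset.sum_nonneg fun j _ => sq_nonneg _
    have := congr_arg (· ^ 2) h1
    simpa [Real.sq_sqrt hnn] using this
  · rintro ⟨h1, h2⟩
    exact ⟨by rw [h1, Real.sqrt_one], h2⟩

abbrev Kset (n : ℕ) : Set (Matrix (Fin n) (Fin n) ℝ) :=
  {P | P.PosSemidef ∧ P.trace = 1}

lemma psd_transpose_eq {P : Matrix (Fin n) (Fin n) ℝ} (hP : P.IsHermitian) : Pᵀ = P := by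
  rw [← Matrix.conjTranspose_eq_transpose_of_trivial]
  exact hP

section QuotPart

variable (n)

abbrev ZT (n : ℕ) := {M : Matrix (Fin n) (Fin n) ℝ //
    Real.sqrt (∑ i, ∑ j, M i j ^ 2) = 1 ∧ 0 ≤ M.det}

abbrev rel : ZT n → ZT n → Prop := fun A B =>
  ∃ Q : Matrix (Fin n) (Fin n) ℝ, Qᵀ * Q = 1 ∧ Q.det = 1 ∧ B.1 = Q * A.1

variable {n}

lemma psd_tmul (A : Matrix (Fin n) (Fin n) ℝ) : (Aᵀ * A).PosSemidef := by
  have := Matrix.posSemidef_conjTranspose_mul_self A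
  rwa [Matrix.conjTranspose_eq_transpose_of_trivial] at this

def toK : ZT n → ↥(Kset n) := fun A =>
  ⟨A.1ᵀ * A.1, psd_tmul A.1, by
    rw [trace_tmul]
    exact ((mem_Zset_iff A.1).mp A.2).1⟩

lemma toK_respects (A B : ZT n) (h : rel n A B) : toK A = toK B := by
  obtain ⟨Q, hQ, -, hBA⟩ := h
  apply Subtype.ext
  show A.1ᵀ * A.1 = B.1ᵀ * B.1
  rw [hBA, transpose_mul]
  calc A.1ᵀ * A.1 = A.1ᵀ * ((Qᵀ * Q) * A.1) := by rw [hQ, one_mul]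
  _ = A.1ᵀ * Qᵀ * (Q * A.1) := by noncomm_ring

variable (n)

noncomputable def psi : Quot (rel n) → ↥(Kset n) := Quot.lift toK toK_respects

lemma psi_bijective : Function.Bijective (psi n) := by
  constructor
  · intro x y
    induction x using Quot.ind with | _ A => ?_
    induction y using Quot.ind with | _ B => ?_
    intro h
    have h' : A.1ᵀ * A.1 = B.1ᵀ * B.1 := Subtype.ext_iff.mp h
    obtain ⟨Q, hQ1, hQ2, hQ3⟩ := key A.2.2 B.2.2 h'
    exact Quot.sound ⟨Q, hQ1, hQ2, hQ3⟩
  · rintro ⟨P, hP, htr⟩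
    have hs := hP.posSemidef_sqrt
    have hT : hP.sqrtᵀ = hP.sqrt := psd_transpose_eq hs.1
    have hmul : hP.sqrtᵀ * hP.sqrt = P := by rw [hT, hP.sqrt_mul_self]
    have hmem : hP.sqrt ∈ Zset n := by
      rw [mem_Zset_iff]
      refine ⟨?_, psd_det_nonneg hs⟩
      rw [← trace_tmul, hmul, htr]
    refine ⟨Quot.mk _ ⟨hP.sqrt, hmem⟩, ?_⟩
    apply Subtype.ext
    exact hmul

lemma psi_continuous : Continuous (psi n) := by
  apply continuous_quot_lift
  apply Continuous.subtype_mk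
  exact (continuous_subtype_val.matrix_transpose).matrix_mul continuous_subtype_val

lemma isCompact_Zset : IsCompact (Zset n) := by
  have hbox : IsCompact (Set.univ.pi fun _ : Fin n =>
      Set.univ.pi fun _ : Fin n => Set.Icc (-1:ℝ) 1) :=
    isCompact_univ_pi fun _ => isCompact_univ_pi fun _ => isCompact_Icc
  have hsub : Zset n ⊆ Set.univ.pi fun _ : Fin n =>
      Set.univ.pi fun _ : Fin n => Set.Icc (-1:ℝ) 1 := by
    intro M hM
    rw [mem_Zset_iff] at hM
    intro i _
    intro j _
    have h1 : M i j ^ 2 ≤ 1 := by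
      rw [← hM.1]
      have ha := Finset.single_le_sum (f := fun j => M i j ^ 2)
        (fun j _ => sq_nonneg _) (Finset.mem_univ j)
      have hb := Finset.single_le_sum (f := fun i => ∑ j, M i j ^ 2)
        (fun i _ => Finset.sum_nonneg fun j _ => sq_nonneg _) (Finset.mem_univ i)
      linarith
    have h2 : |M i j| ≤ 1 := (sq_le_one_iff_abs_le_one (a := M i j)).mp h1
    exact Set.mem_Icc.mpr (abs_le.mp h2)
  have hcl : IsClosed (Zset n) := by
    have h1 : IsClosed {M : Matrix (Fin n) (Fin n) ℝ |
        Real.sqrt (∑ i, ∑ j, M i j ^ 2) = 1} := by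
      apply isClosed_eq _ continuous_const
      apply Real.continuous_sqrt.comp
      apply continuous_finset_sum
      intro i _
      apply continuous_finset_sum
      intro j _
      exact ((continuous_apply j).comp (continuous_apply i)).pow 2
    have h2 : IsClosed {M : Matrix (Fin n) (Fin n) ℝ | 0 ≤ M.det} :=
      isClosed_le continuous_const (continuous_id.matrix_det)
    exact h1.inter h2
  exact hbox.of_isClosed_subset hcl hsub

end QuotPart

section ConvexPart

variable (n : ℕ)

abbrev SymIdx (n : ℕ) := {p : Fin n × Fin n // p.1 ≤ p.2}

def Tfun (f : SymIdx n → ℝ) : Matrix (Fin n) (Fin n) ℝ :=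
  Matrix.of fun i j => if h : i ≤ j then f ⟨(i, j), h⟩ else f ⟨(j, i), le_of_not_ge h⟩

def Sfun (M : Matrix (Fin n) (Fin n) ℝ) : SymIdx n → ℝ := fun p => M p.1.1 p.1.2

variable {n}

lemma Tfun_symm (f : SymIdx n → ℝ) : (Tfun n f)ᵀ = Tfun n f := by
  ext i j
  simp only [transpose_apply, Tfun, of_apply]
  rcases le_or_gt i j with h | h
  · rcases eq_or_lt_of_le h with rfl | hlt
    · simp
    · rw [dif_neg (not_le.mpr hlt), dif_pos h]
  · rw [dif_pos h.le, dif_neg (not_le.mpr h)]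

lemma Sfun_Tfun (f : SymIdx n → ℝ) : Sfun n (Tfun n f) = f := by
  funext p
  obtain ⟨⟨i, j⟩, hp⟩ := p
  simp only [Sfun, Tfun, of_apply]
  rw [dif_pos hp]

lemma Tfun_Sfun (M : Matrix (Fin n) (Fin n) ℝ) (hM : Mᵀ = M) : Tfun n (Sfun n M) = M := by
  funext i j
  simp only [Tfun, Sfun, of_apply]
  split
  · rfl
  · exact congr_fun (congr_fun hM i) j

lemma Tfun_add (f g : SymIdx n → ℝ) : Tfun n (f + g) = Tfun n f + Tfun n g := by
  funext i j
  simp only [Tfun, of_apply, Matrix.add_apply, Pi.add_apply]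
  split <;> rfl

lemma Tfun_smul (c : ℝ) (f : SymIdx n → ℝ) : Tfun n (c • f) = c • Tfun n f := by
  funext i j
  simp only [Tfun, of_apply, Matrix.smul_apply, Pi.smul_apply]
  split <;> rfl

variable (n)

def Tlin : (SymIdx n → ℝ) →ₗ[ℝ] Matrix (Fin n) (Fin n) ℝ where
  toFun := Tfun n
  map_add' := Tfun_add
  map_smul' := Tfun_smul

noncomputable def lfun : (SymIdx n → ℝ) →ₗ[ℝ] ℝ :=
  (Matrix.traceLinearMap (Fin n) ℝ ℝ).comp (Tlin n)

def Wsub : Submodule ℝ (Matrix (Fin n) (Fin n) ℝ) where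
  carrier := {P | Pᵀ = P ∧ P.trace = 0}
  add_mem' := by
    rintro a b ⟨ha1, ha2⟩ ⟨hb1, hb2⟩
    exact ⟨by rw [transpose_add, ha1, hb1], by rw [trace_add, ha2, hb2, add_zero]⟩
  zero_mem' := ⟨transpose_zero, Matrix.trace_zero (Fin n) ℝ⟩
  smul_mem' := by
    rintro c a ⟨h1, h2⟩
    exact ⟨by rw [transpose_smul, h1], by rw [trace_smul, h2, smul_zero]⟩

noncomputable def eW : (LinearMap.ker (lfun n)) ≃ₗ[ℝ] (Wsub n) where
  toFun f := ⟨Tfun n f.1, Tfun_symm f.1, LinearMap.mem_ker.mp f.2⟩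
  map_add' f g := by apply Subtype.ext; exact Tfun_add f.1 g.1
  map_smul' c f := by apply Subtype.ext; exact Tfun_smul c f.1
  invFun P := ⟨Sfun n P.1, by
    rw [LinearMap.mem_ker]
    show (Tfun n (Sfun n P.1)).trace = 0
    rw [Tfun_Sfun P.1 P.2.1]
    exact P.2.2⟩
  left_inv f := by apply Subtype.ext; exact Sfun_Tfun f.1
  right_inv P := by apply Subtype.ext; exact Tfun_Sfun P.1 P.2.1

lemma lfun_surjective (hn : 1 ≤ n) : Function.Surjective (lfun n) := by
  intro r
  refine ⟨(r / n) • Sfun n 1, ?_⟩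
  have h1 : Tfun n (Sfun n 1) = 1 := Tfun_Sfun 1 transpose_one
  have : lfun n (Sfun n 1) = n := by
    show (Tfun n (Sfun n 1)).trace = n
    rw [h1, trace_one]
    simp
  rw [_root_.map_smul, this]
  have hn0 : (n : ℝ) ≠ 0 := Nat.cast_ne_zero.mpr (by omega)
  rw [smul_eq_mul]
  field_simp

lemma finrank_Wsub (hn : 1 ≤ n) : Module.finrank ℝ (Wsub n) = (n ^ 2 + n - 2) / 2 := by
  have he : Module.finrank ℝ (Wsub n) = Module.finrank ℝ (LinearMap.ker (lfun n)) :=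
    (eW n).symm.finrank_eq
  have hrn := (lfun n).finrank_range_add_finrank_ker
  have hrange : LinearMap.range (lfun n) = ⊤ :=
    LinearMap.range_eq_top.mpr (lfun_surjective n hn)
  rw [hrange] at hrn
  have htop : Module.finrank ℝ (⊤ : Submodule ℝ ℝ) = 1 := by
    rw [finrank_top]; exact Module.finrank_self ℝ
  rw [htop] at hrn
  have hY : Module.finrank ℝ (SymIdx n → ℝ) = Fintype.card (SymIdx n) := by
    rw [Module.finrank_pi]
  have hcard : Fintype.card (SymIdx n) = (n + 1).choose 2 := by
    rw [← Fintype.card_congr (Sym2.sortEquiv (α := Fin n))]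
    rw [Sym2.card]
    simp
  have hch : (n + 1).choose 2 = (n + 1) * n / 2 := by
    rw [Nat.choose_two_right]
    simp
  have heq : n ^ 2 + n = (n + 1) * n := by ring
  have hdvd : 2 ∣ (n + 1) * n := by
    rcases Nat.even_mul_succ_self n with ⟨k, hk⟩
    refine ⟨k, ?_⟩
    rw [mul_comm]
    omega
  have hb2 : 2 ≤ (n + 1) * n := by nlinarith
  rw [he]
  omega

end ConvexPart

section Assembly

variable (n : ℕ)

noncomputable def cmat : Matrix (Fin n) (Fin n) ℝ := ((n : ℝ)⁻¹) • 1

lemma cmat_transpose : (cmat n)ᵀ = cmat n := by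
  rw [cmat, transpose_smul, transpose_one]

lemma cmat_trace (hn : 1 ≤ n) : (cmat n).trace = 1 := by
  rw [cmat, trace_smul, trace_one]
  have hn0 : (n : ℝ) ≠ 0 := Nat.cast_ne_zero.mpr (by omega)
  simp [hn0]

def SW : Set (Wsub n) := {S | (cmat n + S.1).PosSemidef}

variable {n}

lemma hermitian_of_symm {M : Matrix (Fin n) (Fin n) ℝ} (h : Mᵀ = M) : M.IsHermitian := by
  rwa [Matrix.IsHermitian, Matrix.conjTranspose_eq_transpose_of_trivial]

lemma psd_smul {M : Matrix (Fin n) (Fin n) ℝ} (hM : M.PosSemidef) {a : ℝ} (ha : 0 ≤ a) :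
    (a • M).PosSemidef := by
  constructor
  · apply hermitian_of_symm
    rw [transpose_smul, psd_transpose_eq hM.1]
  · exact (hM.smul ha).2

lemma SW_convex : Convex ℝ (SW n) := by
  intro S hS T hT a b ha hb hab
  show (cmat n + (a • S + b • T).1).PosSemidef
  have hc : a • cmat n + b • cmat n = cmat n := by rw [← add_smul, hab, one_smul]
  have hrw : cmat n + (a • S + b • T).1 = a • (cmat n + S.1) + b • (cmat n + T.1) := by
    have hv : (a • S + b • T).1 = a • S.1 + b • T.1 := rfl
    have h2 : a • (cmat n + S.1) + b • (cmat n + T.1)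
        = (a • cmat n + b • cmat n) + (a • S.1 + b • T.1) := by
      rw [smul_add, smul_add]
      abel
    rw [hv, h2, hc]
  rw [hrw]
  exact (psd_smul hS ha).add (psd_smul hT hb)

lemma SW_mem_nhds (hn : 1 ≤ n) : SW n ∈ 𝓝 (0 : ↥(Wsub n)) := by
  have hn0 : (n : ℝ) ≠ 0 := Nat.cast_ne_zero.mpr (by omega)
  set δ : ℝ := ((n : ℝ) ^ 2)⁻¹ with hδdef
  have hδ : (0 : ℝ) < δ := by positivity
  have hOeq : {S : ↥(Wsub n) | ∀ i j, |S.1 i j| < δ}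
      = ⋂ i, ⋂ j, {S : ↥(Wsub n) | |S.1 i j| < δ} := by
    ext S; simp
  have hO : IsOpen {S : ↥(Wsub n) | ∀ i j, |S.1 i j| < δ} := by
    rw [hOeq]
    refine isOpen_iInter_of_finite fun i => isOpen_iInter_of_finite fun j => ?_
    have hc : Continuous fun S : ↥(Wsub n) => |S.1 i j| :=
      (continuous_subtype_val.matrix_elem i j).abs
    exact isOpen_lt hc continuous_const
  refine Filter.mem_of_superset (hO.mem_nhds ?_) ?_
  · intro i j
    simpa using hδ
  · intro S hS
    show (cmat n + S.1).PosSemidef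
    rw [posSemidef_iff_dotProduct_mulVec]
    constructor
    · apply hermitian_of_symm
      rw [transpose_add, cmat_transpose, S.2.1]
    · intro x
      have hstar : star x = x := funext fun k => star_trivial _
      rw [hstar, add_mulVec, dotProduct_add]
      have hc1 : x ⬝ᵥ (cmat n *ᵥ x) = (n : ℝ)⁻¹ * ∑ k, x k ^ 2 := by
        rw [cmat, smul_mulVec, one_mulVec, dotProduct_smul]
        simp only [smul_eq_mul, dotProduct]
        congr 1
        exact Finset.sum_congr rfl fun k _ => (sq (x k)).symm ▸ (pow_two (x k)).symm
      have h1 : x ⬝ᵥ (S.1 *ᵥ x) = ∑ i, ∑ j, x i * (S.1 i j * x j) := by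
        simp [dotProduct, Matrix.mulVec, Finset.mul_sum]
      have habs : |x ⬝ᵥ (S.1 *ᵥ x)| ≤ ∑ i, ∑ j, |x i| * (δ * |x j|) := by
        rw [h1]
        refine (Finset.abs_sum_le_sum_abs _ _).trans (Finset.sum_le_sum fun i _ => ?_)
        refine (Finset.abs_sum_le_sum_abs _ _).trans (Finset.sum_le_sum fun j _ => ?_)
        rw [abs_mul, abs_mul]
        have := (hS i j).le
        gcongr
      have hsum : (∑ i, ∑ j, |x i| * (δ * |x j|)) = δ * (∑ k, |x k|) ^ 2 := by
        rw [← Finset.sum_mul_sum, ← Finset.mul_sum]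
        ring
      have hCS : (∑ k, |x k|) ^ 2 ≤ (n : ℝ) * ∑ k, x k ^ 2 := by
        have h := sq_sum_le_card_mul_sum_sq (s := (Finset.univ : Finset (Fin n)))
          (f := fun k => |x k|)
        simpa [sq_abs] using h
      have hxnn : (0:ℝ) ≤ ∑ k, x k ^ 2 := Finset.sum_nonneg fun k _ => sq_nonneg _
      have h3 : δ * ((n:ℝ) * ∑ k, x k ^ 2) = (n:ℝ)⁻¹ * ∑ k, x k ^ 2 := by
        rw [hδdef]
        field_simp
      have hbound : |x ⬝ᵥ (S.1 *ᵥ x)| ≤ (n:ℝ)⁻¹ * ∑ k, x k ^ 2 := by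
        calc |x ⬝ᵥ (S.1 *ᵥ x)| ≤ δ * (∑ k, |x k|) ^ 2 := by rw [← hsum]; exact habs
        _ ≤ δ * ((n:ℝ) * ∑ k, x k ^ 2) := by
            exact mul_le_mul_of_nonneg_left hCS hδ.le
        _ = (n:ℝ)⁻¹ * ∑ k, x k ^ 2 := h3
      rw [hc1]
      have := neg_abs_le (x ⬝ᵥ (S.1 *ᵥ x))
      linarith

variable (n)

noncomputable def homeoKSW (hn : 1 ≤ n) : ↥(Kset n) ≃ₜ ↥(SW n) where
  toFun P := ⟨⟨P.1 - cmat n, by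
      rw [transpose_sub, cmat_transpose, psd_transpose_eq P.2.1.1], by
      rw [trace_sub, P.2.2, cmat_trace n hn, sub_self]⟩, by
    show (cmat n + (P.1 - cmat n)).PosSemidef
    have h : cmat n + (P.1 - cmat n) = P.1 := by abel
    rw [h]
    exact P.2.1⟩
  invFun S := ⟨cmat n + S.1.1, S.2, by
    rw [trace_add, cmat_trace n hn, S.1.2.2, add_zero]⟩
  left_inv P := by
    apply Subtype.ext
    show cmat n + (P.1 - cmat n) = P.1
    abel
  right_inv S := by
    apply Subtype.ext
    apply Subtype.ext
    show (cmat n + S.1.1) - cmat n = S.1.1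
    abel
  continuous_toFun := by
    apply Continuous.subtype_mk
    apply Continuous.subtype_mk
    exact continuous_subtype_val.sub continuous_const
  continuous_invFun := by
    apply Continuous.subtype_mk
    exact continuous_const.add (continuous_subtype_val.comp continuous_subtype_val)

end Assembly

/-- Orbit space of `Z = {A : ‖A‖ = 1, det A ≥ 0}` by the left `SO(n)`-action is
a closed ball of dimension `(n² + n - 2)/2`. -/
theorem Z_quotient_SO_homeomorphic_ball (n : ℕ) (hn : 1 ≤ n) :
    Nonempty (Quot
      (fun A B : {M : Matrix (Fin n) (Fin n) ℝ //
          Real.sqrt (∑ i, ∑ j, M i j ^ 2) = 1 ∧ 0 ≤ M.det} =>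
        ∃ Q : Matrix (Fin n) (Fin n) ℝ, Qᵀ * Q = 1 ∧ Q.det = 1 ∧ B.1 = Q * A.1)
      ≃ₜ Metric.closedBall (0 : EuclideanSpace ℝ (Fin ((n ^ 2 + n - 2) / 2))) 1) := by
  haveI hcz : CompactSpace (ZT n) := isCompact_iff_compactSpace.mp (isCompact_Zset (n := n))
  haveI hcq : CompactSpace (Quot (rel n)) :=
    ⟨by rw [← (Quot.mk_surjective (r := rel n)).range_eq]
        exact isCompact_range continuous_quot_mk⟩
  let eqv : Quot (rel n) ≃ ↥(Kset n) := Equiv.ofBijective _ (psi_bijective n)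
  let h1 : Quot (rel n) ≃ₜ ↥(Kset n) :=
    Continuous.homeoOfEquivCompactToT2 (f := eqv) (psi_continuous n)
  haveI : CompactSpace ↥(Kset n) := h1.compactSpace
  haveI : CompactSpace ↥(SW n) := (homeoKSW n hn).compactSpace
  have hSWcomp : IsCompact (SW n) := isCompact_iff_compactSpace.mpr inferInstance
  let elin : EuclideanSpace ℝ (Fin ((n ^ 2 + n - 2) / 2)) ≃ₗ[ℝ] ↥(Wsub n) :=
    LinearEquiv.ofFinrankEq _ _ (by
      rw [finrank_euclideanSpace_fin, finrank_Wsub n hn])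
  let eH : EuclideanSpace ℝ (Fin ((n ^ 2 + n - 2) / 2)) ≃ₜ ↥(Wsub n) :=
    elin.toContinuousLinearEquiv.toHomeomorph
  set C : Set (EuclideanSpace ℝ (Fin ((n ^ 2 + n - 2) / 2))) := ⇑eH.symm '' SW n with hCdef
  have h3 : ↥(SW n) ≃ₜ ↥C := eH.symm.image (SW n)
  have hco : ⇑eH.symm = ⇑elin.symm := rfl
  have hCconv : Convex ℝ C := by
    rw [hCdef, hco]
    exact (SW_convex).linear_image elin.symm.toLinearMap
  have hCcomp : IsCompact C := hSWcomp.image eH.symm.continuous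
  have hC0 : C ∈ 𝓝 (0 : EuclideanSpace ℝ (Fin ((n ^ 2 + n - 2) / 2))) := by
    have h := Filter.image_mem_map (m := ⇑eH.symm) (SW_mem_nhds hn)
    rw [eH.symm.map_nhds_eq] at h
    have h0 : eH.symm 0 = 0 := by rw [hco, map_zero]
    rwa [h0] at h
  have hCb : Bornology.IsVonNBounded ℝ C :=
    NormedSpace.isVonNBounded_of_isBounded _ hCcomp.isBounded
  let g := gaugeRescaleHomeomorph C (Metric.closedBall 0 1) hCconv hC0 hCb
    (convex_closedBall 0 1) (Metric.closedBall_mem_nhds 0 one_pos)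
    (NormedSpace.isVonNBounded_closedBall ℝ _ 1)
  have himg : ⇑g '' C = Metric.closedBall 0 1 := by
    have h := image_gaugeRescaleHomeomorph_closure hCconv hC0 hCb
      (convex_closedBall 0 1) (Metric.closedBall_mem_nhds 0 one_pos)
      (NormedSpace.isVonNBounded_closedBall ℝ _ 1)
    rwa [hCcomp.isClosed.closure_eq, Metric.isClosed_closedBall.closure_eq] at h
  let h4 : ↥C ≃ₜ ↥(Metric.closedBall (0 : EuclideanSpace ℝ
      (Fin ((n ^ 2 + n - 2) / 2))) 1) := (g.image C).trans (Homeomorph.setCongr himg)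
  exact ⟨h1.trans ((homeoKSW n hn).trans (h3.trans h4))⟩
end

section
/- Let T² = ℝ²/ℤ² be the 2-torus and let σ: T² → T² be the involution σ(a) = −a. Then the quotient space T²/σ (identifying each point with its σ-image) is homeomorphic to S². -/
open Real

/-- The 2-torus `T² = ℝ²/ℤ²`. -/
abbrev Torus2 : Type := AddCircle (1 : ℝ) × AddCircle (1 : ℝ)

noncomputable section TorusSphere
namespace TorusSphere

/-- components of the pillowcase map -/
def fc (x y : ℝ) : Fin 3 → ℝ :=
  ![Real.cos (2*π*x), Real.cos (2*π*y), Real.sin (2*π*x) * Real.sin (2*π*y)]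

def F (x y : ℝ) : EuclideanSpace ℝ (Fin 3) :=
  (√(1 + (Real.cos (2*π*x) * Real.cos (2*π*y))^2))⁻¹ •
    (WithLp.equiv 2 (Fin 3 → ℝ)).symm (fc x y)

lemma normsq (x y : ℝ) :
    Real.cos (2*π*x)^2 + Real.cos (2*π*y)^2 + (Real.sin (2*π*x) * Real.sin (2*π*y))^2
      = 1 + (Real.cos (2*π*x) * Real.cos (2*π*y))^2 := by
  nlinarith [Real.sin_sq_add_cos_sq (2*π*x), Real.sin_sq_add_cos_sq (2*π*y)]

lemma one_le (x y : ℝ) : (1:ℝ) ≤ 1 + (Real.cos (2*π*x) * Real.cos (2*π*y))^2 := by nlinarith [sq_nonneg (Real.cos (2*π*x) * Real.cos (2*π*y))]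

lemma F_apply (x y : ℝ) (i : Fin 3) :
    F x y i = (√(1 + (Real.cos (2*π*x) * Real.cos (2*π*y))^2))⁻¹ * fc x y i := rfl

lemma F_norm (x y : ℝ) : ‖F x y‖ = 1 := by
  have h1 : (0:ℝ) < 1 + (Real.cos (2*π*x) * Real.cos (2*π*y))^2 := lt_of_lt_of_le one_pos (one_le x y)
  have hs : (0:ℝ) < √(1 + (Real.cos (2*π*x) * Real.cos (2*π*y))^2) := Real.sqrt_pos.mpr h1
  rw [F, norm_smul]
  rw [EuclideanSpace.norm_eq]
  have : ∀ i : Fin 3, ‖((WithLp.equiv 2 (Fin 3 → ℝ)).symm (fc x y)) i‖ ^ 2 = fc x y i ^ 2 := by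
    intro i; rw [WithLp.equiv_symm_apply, PiLp.toLp_apply, Real.norm_eq_abs, sq_abs]
  simp only [this]
  rw [Fin.sum_univ_three]
  simp only [fc, Matrix.cons_val_zero, Matrix.cons_val_one, Matrix.head_cons,
    Matrix.cons_val_two, Matrix.tail_cons]
  rw [normsq x y]
  rw [norm_inv, Real.norm_eq_abs, abs_of_pos hs]
  field_simp


lemma cos_per (x : ℝ) (k : ℤ) : Real.cos (2*π*(x + k)) = Real.cos (2*π*x) := by
  have : 2*π*(x + k) = 2*π*x + k * (2*π) := by ring
  rw [this, Real.cos_add_int_mul_two_pi]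

lemma sin_per (x : ℝ) (k : ℤ) : Real.sin (2*π*(x + k)) = Real.sin (2*π*x) := by
  have : 2*π*(x + k) = 2*π*x + k * (2*π) := by ring
  rw [this, Real.sin_add_int_mul_two_pi]

lemma cos_refl (x : ℝ) (k : ℤ) : Real.cos (2*π*((k:ℝ) - x)) = Real.cos (2*π*x) := by
  have : 2*π*((k:ℝ) - x) = -(2*π*x) + k * (2*π) := by ring
  rw [this, Real.cos_add_int_mul_two_pi, Real.cos_neg]

lemma sin_refl (x : ℝ) (k : ℤ) : Real.sin (2*π*((k:ℝ) - x)) = -Real.sin (2*π*x) := by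
  have : 2*π*((k:ℝ) - x) = -(2*π*x) + k * (2*π) := by ring
  rw [this, Real.sin_add_int_mul_two_pi, Real.sin_neg]

/-- coe equality in `AddCircle 1` -/
lemma coe_eq_coe {a b : ℝ} : (a : AddCircle (1:ℝ)) = b ↔ ∃ k : ℤ, (k:ℝ) = a - b := by
  rw [← sub_eq_zero, ← QuotientAddGroup.mk_sub, AddCircle.coe_eq_zero_iff]
  simp [zsmul_eq_mul]

lemma coe_add_int (x : ℝ) (k : ℤ) : ((x + k : ℝ) : AddCircle (1:ℝ)) = x :=
  coe_eq_coe.mpr ⟨k, by ring⟩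

lemma coe_neg' (x : ℝ) : ((-x : ℝ) : AddCircle (1:ℝ)) = -(x : AddCircle (1:ℝ)) := by
  rw [QuotientAddGroup.mk_neg]

lemma self_eq_neg_of_sin {x : ℝ} (h : Real.sin (2*π*x) = 0) :
    ((x : ℝ) : AddCircle (1:ℝ)) = -(x : AddCircle (1:ℝ)) := by
  rw [← coe_neg', coe_eq_coe]
  obtain ⟨n, hn⟩ := Real.sin_eq_zero_iff.mp h
  refine ⟨n, ?_⟩
  have hpi : (π:ℝ) ≠ 0 := Real.pi_ne_zero
  have h2 : (n:ℝ) * π = (2*x) * π := by linarith [hn]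
  have h3 := mul_right_cancel₀ hpi h2
  linarith


lemma scale_core {A B W A' B' W' : ℝ}
    (hA1 : A^2 ≤ 1) (hB1 : B^2 ≤ 1) (hA1' : A'^2 ≤ 1) (hB1' : B'^2 ≤ 1)
    (e0 : (√(1 + (A*B)^2))⁻¹ * A = (√(1 + (A'*B')^2))⁻¹ * A')
    (e1 : (√(1 + (A*B)^2))⁻¹ * B = (√(1 + (A'*B')^2))⁻¹ * B')
    (e2 : (√(1 + (A*B)^2))⁻¹ * W = (√(1 + (A'*B')^2))⁻¹ * W') :
    A = A' ∧ B = B' ∧ W = W' := by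
  set r := √(1 + (A*B)^2) with hrdef
  set r' := √(1 + (A'*B')^2) with hrdef'
  have h1 : (0:ℝ) < 1 + (A*B)^2 := by nlinarith [sq_nonneg (A*B)]
  have h1' : (0:ℝ) < 1 + (A'*B')^2 := by nlinarith [sq_nonneg (A'*B')]
  have hr : r^2 = 1 + (A*B)^2 := Real.sq_sqrt h1.le
  have hr' : r'^2 = 1 + (A'*B')^2 := Real.sq_sqrt h1'.le
  have hrpos : 0 < r := Real.sqrt_pos.mpr h1
  have hrpos' : 0 < r' := Real.sqrt_pos.mpr h1'
  set σ := r'/r with hσdef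
  have hσpos : 0 < σ := div_pos hrpos' hrpos
  have hA' : A' = σ * A := by
    rw [hσdef]; field_simp
    field_simp at e0; linarith [e0]
  have hB' : B' = σ * B := by
    rw [hσdef]; field_simp
    field_simp at e1; linarith [e1]
  have hW' : W' = σ * W := by
    rw [hσdef]; field_simp
    field_simp at e2; linarith [e2]
  have hrr : r'^2 = σ^2 * r^2 := by rw [hσdef, div_pow, div_mul_cancel₀ _ (pow_ne_zero 2 hrpos.ne')]
  have hkey : (σ^2 - 1) * (1 - σ^2 * (A*B)^2) = 0 := by
    have : 1 + (σ*A*(σ*B))^2 = σ^2 * (1 + (A*B)^2) := by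
      rw [← hr, ← hrr, hr', hA', hB']
    linear_combination -this
  have hσ1 : σ = 1 := by
    rcases mul_eq_zero.mp hkey with h | h
    · have : (σ - 1) * (σ + 1) = 0 := by nlinarith
      rcases mul_eq_zero.mp this with h' | h'
      · linarith
      · linarith
    · -- σ^2 * (A*B)^2 = 1
      have hP : σ^2 * (A*B)^2 = 1 := by linarith
      have hP1 : (A*B)^2 ≤ 1 := by
        calc (A*B)^2 = A^2 * B^2 := by ring
          _ ≤ 1 * 1 := mul_le_mul hA1 hB1 (sq_nonneg B) zero_le_one
          _ = 1 := one_mul 1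
      have hP1' : (A'*B')^2 ≤ 1 := by
        calc (A'*B')^2 = A'^2 * B'^2 := by ring
          _ ≤ 1 * 1 := mul_le_mul hA1' hB1' (sq_nonneg B') zero_le_one
          _ = 1 := one_mul 1
      have hge : 1 ≤ σ^2 := by
        nlinarith [mul_nonneg (sq_nonneg σ) (sub_nonneg.mpr hP1)]
      have h4 : (A'*B')^2 = σ^2 := by
        rw [hA', hB']; linear_combination σ^2 * hP
      have hle : σ^2 ≤ 1 := h4 ▸ hP1'
      have hsq : σ^2 = 1 := le_antisymm hle hge
      have : (σ - 1) * (σ + 1) = 0 := by linear_combination hsq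
      rcases mul_eq_zero.mp this with h' | h'
      · linarith
      · linarith
  rw [hσ1, one_mul] at hA' hB' hW'
  exact ⟨hA'.symm, hB'.symm, hW'.symm⟩


lemma coe_refl (x : ℝ) (k : ℤ) : (((k:ℝ) - x : ℝ) : AddCircle (1:ℝ)) = -(x : AddCircle (1:ℝ)) := by
  rw [show (k:ℝ) - x = -x + k by ring, coe_add_int, coe_neg']

lemma cos_cases {x x' : ℝ} (h : Real.cos (2*π*x) = Real.cos (2*π*x')) :
    (∃ k : ℤ, x' = x + k) ∨ (∃ k : ℤ, x' = (k:ℝ) - x) := by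
  have h2pi : (2*π:ℝ) ≠ 0 := by positivity
  obtain ⟨k, hk | hk⟩ := Real.cos_eq_cos_iff.mp h
  · left; exact ⟨k, mul_left_cancel₀ h2pi (by linear_combination hk)⟩
  · right; exact ⟨k, mul_left_cancel₀ h2pi (by linear_combination hk)⟩

lemma F_inj {x y x' y' : ℝ} (h : F x y = F x' y') :
    ((x' : AddCircle (1:ℝ)), (y' : AddCircle (1:ℝ))) = ((x : AddCircle (1:ℝ)), (y : AddCircle (1:ℝ))) ∨
    ((x' : AddCircle (1:ℝ)), (y' : AddCircle (1:ℝ))) = (-(x : AddCircle (1:ℝ)), -(y : AddCircle (1:ℝ))) := by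
  have e0 : F x y 0 = F x' y' 0 := by rw [h]
  have e1 : F x y 1 = F x' y' 1 := by rw [h]
  have e2 : F x y 2 = F x' y' 2 := by rw [h]
  rw [F_apply, F_apply] at e0 e1 e2
  simp only [fc, Matrix.cons_val_zero, Matrix.cons_val_one, Matrix.head_cons,
    Matrix.cons_val_two, Matrix.tail_cons] at e0 e1 e2
  obtain ⟨hA, hB, hW⟩ := scale_core (Real.cos_sq_le_one _) (Real.cos_sq_le_one _)
    (Real.cos_sq_le_one _) (Real.cos_sq_le_one _) e0 e1 e2
  rcases cos_cases hA with ⟨k, hk⟩ | ⟨k, hk⟩ <;> rcases cos_cases hB with ⟨l, hl⟩ | ⟨l, hl⟩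
  · -- x' = x + k, y' = y + l
    left; rw [hk, hl, coe_add_int, coe_add_int]
  · -- x' = x + k, y' = l - y : sin x' = sin x, sin y' = - sin y
    have hW' : Real.sin (2*π*x) * Real.sin (2*π*y)
        = Real.sin (2*π*x) * (-Real.sin (2*π*y)) := by
      rw [hW, hk, hl, sin_per, sin_refl]
    have hzero : Real.sin (2*π*x) * Real.sin (2*π*y) = 0 := by linarith
    rcases mul_eq_zero.mp hzero with hs | hs
    · right
      have h1 : ((x + (k:ℝ) : ℝ) : AddCircle (1:ℝ)) = -(x : AddCircle (1:ℝ)) := by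
        rw [coe_add_int]; exact self_eq_neg_of_sin hs
      rw [hk, hl, Prod.mk.injEq]
      exact ⟨h1, by rw [coe_refl]⟩
    · left
      have h2 : (((l:ℝ) - y : ℝ) : AddCircle (1:ℝ)) = (y : AddCircle (1:ℝ)) := by
        rw [coe_refl]; exact (self_eq_neg_of_sin hs).symm
      rw [hk, hl, Prod.mk.injEq]
      exact ⟨by rw [coe_add_int], h2⟩
  · -- x' = k - x, y' = y + l
    have hW' : Real.sin (2*π*x) * Real.sin (2*π*y)
        = (-Real.sin (2*π*x)) * Real.sin (2*π*y) := by
      rw [hW, hk, hl, sin_per, sin_refl]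
    have hzero : Real.sin (2*π*x) * Real.sin (2*π*y) = 0 := by linarith
    rcases mul_eq_zero.mp hzero with hs | hs
    · left
      have h1 : (((k:ℝ) - x : ℝ) : AddCircle (1:ℝ)) = (x : AddCircle (1:ℝ)) := by
        rw [coe_refl]; exact (self_eq_neg_of_sin hs).symm
      rw [hk, hl, Prod.mk.injEq]
      exact ⟨h1, by rw [coe_add_int]⟩
    · right
      have h2 : ((y + (l:ℝ) : ℝ) : AddCircle (1:ℝ)) = -(y : AddCircle (1:ℝ)) := by
        rw [coe_add_int]; exact self_eq_neg_of_sin hs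
      rw [hk, hl, Prod.mk.injEq]
      exact ⟨by rw [coe_refl], h2⟩
  · right; rw [hk, hl, coe_refl, coe_refl]

lemma F_surj (q : EuclideanSpace ℝ (Fin 3)) (hq : ‖q‖ = 1) : ∃ x y : ℝ, F x y = q := by
  have habc0 : (q 0)^2 + (q 1)^2 + (q 2)^2 = 1 := by
    rw [EuclideanSpace.norm_eq] at hq
    have hnn : (0:ℝ) ≤ ∑ i, ‖q i‖^2 := by positivity
    have h2 : (∑ i, ‖q i‖^2) = 1 := by nlinarith [Real.sq_sqrt hnn, hq]
    rw [Fin.sum_univ_three] at h2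
    simpa [Real.norm_eq_abs, sq_abs] using h2
  obtain ⟨a, ha⟩ : ∃ a : ℝ, a = q 0 := ⟨_, rfl⟩
  obtain ⟨b, hb⟩ : ∃ b : ℝ, b = q 1 := ⟨_, rfl⟩
  obtain ⟨c, hc⟩ : ∃ c : ℝ, c = q 2 := ⟨_, rfl⟩
  have habc : a^2 + b^2 + c^2 = 1 := by rw [ha, hb, hc]; exact habc0
  have hab : 4*a^2*b^2 ≤ 1 := by
    nlinarith [sq_nonneg (a^2 - b^2), sq_nonneg c, sq_nonneg (a^2 + b^2),
      mul_nonneg (sq_nonneg c) (by positivity : (0:ℝ) ≤ 1 + a^2 + b^2)]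
  set D := √(1 - 4*a^2*b^2) with hDdef
  have hD0 : 0 ≤ D := Real.sqrt_nonneg _
  have hD2 : D^2 = 1 - 4*a^2*b^2 := Real.sq_sqrt (by linarith)
  have h1D : (0:ℝ) < 1 + D := by linarith
  set t := √(2/(1+D)) with htdef
  have ht2 : t^2 = 2/(1+D) := Real.sq_sqrt (by positivity)
  have ht0 : 0 < t := Real.sqrt_pos.mpr (by positivity)
  have ht2' : t^2 * (1+D) = 2 := by rw [ht2]; field_simp
  clear_value t D
  have hsq : t^4*(1+D)^2 = 4 := by linear_combination (t^2*(1+D) + 2)*ht2'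
  have hkey : t^2 = 1 + t^4*(a^2*b^2) := by
    have h5 : (t^2 - 1 - t^4*(a^2*b^2))*(1+D)^2 = 0 := by
      linear_combination (1+D)*ht2' - (a^2*b^2)*hsq - hD2
    have h1D2 : (1+D)^2 ≠ 0 := by positivity
    rcases mul_eq_zero.mp h5 with h | h
    · linarith
    · exact absurd h h1D2
  -- bounds
  have hfacA : (1 + D - 2*a^2) * (D + (2*a^2 - 1)) = 4*a^2*c^2 := by
    linear_combination hD2 - 4*a^2*habc
  have hfacB : (1 + D - 2*b^2) * (D + (2*b^2 - 1)) = 4*b^2*c^2 := by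
    linear_combination hD2 - 4*b^2*habc
  have h2aD : 2*a^2 ≤ 1 + D := by
    rcases le_or_gt (2*a^2) 1 with h | h
    · linarith
    · have hpos : 0 < D + (2*a^2 - 1) := by linarith
      nlinarith [hfacA, hpos, sq_nonneg (a*c)]
  have h2bD : 2*b^2 ≤ 1 + D := by
    rcases le_or_gt (2*b^2) 1 with h | h
    · linarith
    · have hpos : 0 < D + (2*b^2 - 1) := by linarith
      nlinarith [hfacB, hpos, sq_nonneg (b*c)]
  have htta : (t*a)^2 ≤ 1 := by
    have hh : (t*a)^2 = 2*a^2/(1+D) := by rw [mul_pow, ht2]; ring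
    rw [hh, div_le_one h1D]; linarith
  have httb : (t*b)^2 ≤ 1 := by
    have hh : (t*b)^2 = 2*b^2/(1+D) := by rw [mul_pow, ht2]; ring
    rw [hh, div_le_one h1D]; linarith
  obtain ⟨hta1, hta2⟩ := abs_le.mp ((sq_le_one_iff_abs_le_one (t*a)).mp htta)
  obtain ⟨htb1, htb2⟩ := abs_le.mp ((sq_le_one_iff_abs_le_one (t*b)).mp httb)
  have htt : 1 + ((t*a)*(t*b))^2 = t^2 := by linear_combination -hkey
  have hprodsq : (1 - (t*a)^2) * (1 - (t*b)^2) = (t*c)^2 := by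
    linear_combination -hkey - t^2*habc
  have h2pi : (2*π:ℝ) ≠ 0 := by positivity
  set x := Real.arccos (t*a) / (2*π) with hxdef
  have h2x : 2*π*x = Real.arccos (t*a) := by rw [hxdef]; field_simp
  have hcx : Real.cos (2*π*x) = t*a := by rw [h2x, Real.cos_arccos hta1 hta2]
  have hsx : Real.sin (2*π*x) = √(1 - (t*a)^2) := by rw [h2x, Real.sin_arccos]
  set y₀ := Real.arccos (t*b) / (2*π) with hydef
  have h2y : 2*π*y₀ = Real.arccos (t*b) := by rw [hydef]; field_simp
  have hcy : Real.cos (2*π*y₀) = t*b := by rw [h2y, Real.cos_arccos htb1 htb2]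
  have hsy : Real.sin (2*π*y₀) = √(1 - (t*b)^2) := by rw [h2y, Real.sin_arccos]
  have hprod : √(1 - (t*a)^2) * √(1 - (t*b)^2) = |t*c| := by
    rw [← Real.sqrt_mul (by linarith [htta] : (0:ℝ) ≤ 1 - (t*a)^2), hprodsq, Real.sqrt_sq_eq_abs]
  -- choose y depending on the sign of t*c
  rcases le_or_gt 0 (t*c) with hsgn | hsgn
  · refine ⟨x, y₀, ?_⟩
    have hwval : Real.sin (2*π*x) * Real.sin (2*π*y₀) = t*c := by
      rw [hsx, hsy, hprod, abs_of_nonneg hsgn]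
    have h0 : (√(1 + (Real.cos (2*π*x) * Real.cos (2*π*y₀))^2))⁻¹ * Real.cos (2*π*x) = q 0 := by
      rw [hcx, hcy, htt, Real.sqrt_sq ht0.le, ← ha]; field_simp
    have h1 : (√(1 + (Real.cos (2*π*x) * Real.cos (2*π*y₀))^2))⁻¹ * Real.cos (2*π*y₀) = q 1 := by
      rw [hcx, hcy, htt, Real.sqrt_sq ht0.le, ← hb]; field_simp
    have h2 : (√(1 + (Real.cos (2*π*x) * Real.cos (2*π*y₀))^2))⁻¹ *
        (Real.sin (2*π*x) * Real.sin (2*π*y₀)) = q 2 := by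
      rw [hcx, hcy, hwval, htt, Real.sqrt_sq ht0.le, ← hc]; field_simp
    ext i
    rw [F_apply]
    fin_cases i
    · exact h0
    · exact h1
    · exact h2
  · refine ⟨x, -y₀, ?_⟩
    have hcy' : Real.cos (2*π*(-y₀)) = t*b := by
      rw [show 2*π*(-y₀) = -(2*π*y₀) by ring, Real.cos_neg, hcy]
    have hsy' : Real.sin (2*π*(-y₀)) = -√(1 - (t*b)^2) := by
      rw [show 2*π*(-y₀) = -(2*π*y₀) by ring, Real.sin_neg, hsy]
    have hwval : Real.sin (2*π*x) * Real.sin (2*π*(-y₀)) = t*c := by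
      rw [hsx, hsy', mul_neg, hprod, abs_of_neg hsgn, neg_neg]
    have h0 : (√(1 + (Real.cos (2*π*x) * Real.cos (2*π*(-y₀)))^2))⁻¹ * Real.cos (2*π*x) = q 0 := by
      rw [hcx, hcy', htt, Real.sqrt_sq ht0.le, ← ha]; field_simp
    have h1 : (√(1 + (Real.cos (2*π*x) * Real.cos (2*π*(-y₀)))^2))⁻¹ * Real.cos (2*π*(-y₀)) = q 1 := by
      rw [hcx, hcy', htt, Real.sqrt_sq ht0.le, ← hb]; field_simp
    have h2 : (√(1 + (Real.cos (2*π*x) * Real.cos (2*π*(-y₀)))^2))⁻¹ *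
        (Real.sin (2*π*x) * Real.sin (2*π*(-y₀))) = q 2 := by
      rw [hcx, hcy', hwval, htt, Real.sqrt_sq ht0.le, ← hc]; field_simp
    ext i
    rw [F_apply]
    fin_cases i
    · exact h0
    · exact h1
    · exact h2

lemma F_cont : Continuous fun p : ℝ × ℝ => F p.1 p.2 := by
  have hc1 : Continuous fun p : ℝ × ℝ => Real.cos (2*π*p.1) :=
    Real.continuous_cos.comp (continuous_const.mul continuous_fst)
  have hc2 : Continuous fun p : ℝ × ℝ => Real.cos (2*π*p.2) :=
    Real.continuous_cos.comp (continuous_const.mul continuous_snd)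
  have hs1 : Continuous fun p : ℝ × ℝ => Real.sin (2*π*p.1) :=
    Real.continuous_sin.comp (continuous_const.mul continuous_fst)
  have hs2 : Continuous fun p : ℝ × ℝ => Real.sin (2*π*p.2) :=
    Real.continuous_sin.comp (continuous_const.mul continuous_snd)
  refine Continuous.smul (f := fun p : ℝ × ℝ => (√(1 + (Real.cos (2*π*p.1) * Real.cos (2*π*p.2))^2))⁻¹)
    (g := fun p : ℝ × ℝ => (WithLp.equiv 2 (Fin 3 → ℝ)).symm (fc p.1 p.2)) ?_ ?_
  · refine Continuous.inv₀ (Real.continuous_sqrt.comp ?_) ?_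
    · exact continuous_const.add ((hc1.mul hc2).pow 2)
    · intro p
      have := one_le p.1 p.2
      exact ne_of_gt (Real.sqrt_pos.mpr (by linarith))
  · refine (PiLp.continuous_toLp 2 (fun _ : Fin 3 => ℝ)).comp ?_
    refine continuous_pi fun i => ?_
    fin_cases i
    · simpa [fc] using hc1
    · simpa [fc] using hc2
    · simp only [fc]; exact hs1.mul hs2

lemma F_shift (x y : ℝ) (k l : ℤ) : F (x + k) (y + l) = F x y := by
  unfold F fc
  rw [cos_per, cos_per, sin_per, sin_per]

lemma F_neg (x y : ℝ) : F (-x) (-y) = F x y := by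
  unfold F fc
  rw [show 2*π*(-x) = -(2*π*x) by ring, show 2*π*(-y) = -(2*π*y) by ring,
    Real.cos_neg, Real.cos_neg, Real.sin_neg, Real.sin_neg, neg_mul_neg]

def Fs (x y : ℝ) : Metric.sphere (0 : EuclideanSpace ℝ (Fin 3)) 1 :=
  ⟨F x y, mem_sphere_zero_iff_norm.mpr (F_norm x y)⟩

def G : Torus2 → Metric.sphere (0 : EuclideanSpace ℝ (Fin 3)) 1 :=
  fun t => Quotient.liftOn₂' t.1 t.2 Fs (by
    intro x y x' y' hx hy
    rw [QuotientAddGroup.leftRel_apply] at hx hy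
    obtain ⟨k, hk⟩ := AddSubgroup.mem_zmultiples_iff.mp hx
    obtain ⟨l, hl⟩ := AddSubgroup.mem_zmultiples_iff.mp hy
    rw [zsmul_eq_mul, mul_one] at hk hl
    have hx' : x' = x + k := by linarith
    have hy' : y' = y + l := by linarith
    apply Subtype.ext
    show F x y = F x' y'
    rw [hx', hy', F_shift])

lemma G_coe (x y : ℝ) : G ((x : AddCircle (1:ℝ)), (y : AddCircle (1:ℝ))) = Fs x y := rfl

lemma G_cont : Continuous G := by
  have hmk : IsOpenQuotientMap
      (Prod.map (QuotientAddGroup.mk : ℝ → AddCircle (1:ℝ))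
        (QuotientAddGroup.mk : ℝ → AddCircle (1:ℝ))) :=
    QuotientAddGroup.isOpenQuotientMap_mk.prodMap QuotientAddGroup.isOpenQuotientMap_mk
  rw [← hmk.continuous_comp_iff]
  exact F_cont.subtype_mk _

lemma G_neg (a : Torus2) : G (-a) = G a := by
  obtain ⟨a1, a2⟩ := a
  induction a1 using QuotientAddGroup.induction_on with | H x =>
  induction a2 using QuotientAddGroup.induction_on with | H y =>
  show G (-(x : AddCircle (1:ℝ)), -(y : AddCircle (1:ℝ))) = G (↑x, ↑y)
  rw [← QuotientAddGroup.mk_neg, ← QuotientAddGroup.mk_neg, G_coe, G_coe]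
  exact Subtype.ext (F_neg x y)

def H : Quot (fun a b : Torus2 => b = -a) → Metric.sphere (0 : EuclideanSpace ℝ (Fin 3)) 1 :=
  Quot.lift G fun a b hab => by rw [hab, G_neg]

lemma H_cont : Continuous H :=
  continuous_quot_lift _ G_cont

lemma H_surj : Function.Surjective H := by
  intro q
  obtain ⟨x, y, hxy⟩ := F_surj q.1 (mem_sphere_zero_iff_norm.mp q.2)
  exact ⟨Quot.mk _ ((x : AddCircle (1:ℝ)), (y : AddCircle (1:ℝ))), Subtype.ext hxy⟩

lemma H_inj : Function.Injective H := by
  intro p q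
  induction p using Quot.ind with | mk a =>
  induction q using Quot.ind with | mk b =>
  obtain ⟨a1, a2⟩ := a
  obtain ⟨b1, b2⟩ := b
  induction a1 using QuotientAddGroup.induction_on with | H x =>
  induction a2 using QuotientAddGroup.induction_on with | H y =>
  induction b1 using QuotientAddGroup.induction_on with | H x' =>
  induction b2 using QuotientAddGroup.induction_on with | H y' =>
  intro h
  have hF : F x y = F x' y' := congrArg Subtype.val h
  rcases F_inj hF with h' | h'
  · rw [← h']
  · apply Quot.sound
    show ((x' : AddCircle (1:ℝ)), (y' : AddCircle (1:ℝ))) = -(↑x, ↑y)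
    rw [Prod.neg_mk]
    exact h'
end TorusSphere

end TorusSphere

/-- `T²/σ ≅ S²` for the involution `σ(a) = -a`. -/
theorem torus_quotient_neg_homeomorphic_S2 :
    Nonempty (Quot (fun a b : Torus2 => b = -a)
      ≃ₜ Metric.sphere (0 : EuclideanSpace ℝ (Fin 3)) 1) := by
  haveI : Fact ((0:ℝ) < 1) := ⟨one_pos⟩
  exact ⟨Continuous.homeoOfEquivCompactToT2
    (f := Equiv.ofBijective TorusSphere.H ⟨TorusSphere.H_inj, TorusSphere.H_surj⟩)
    TorusSphere.H_cont⟩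
end

section
/- Let S⁴ = {(r,z₁,z₂) ∈ ℝ × ℂ² : r² + |z₁|² + |z₂|² = 1} and let σ be the involution σ(r,z₁,z₂) = (r, conj(z₁), conj(z₂)). Then the quotient space S⁴/σ (identifying each point with its σ-image) is homeomorphic to S⁴. -/
open Complex

/-- The unit sphere `S⁴ ⊂ ℝ × ℂ²`. -/
abbrev Sph4 : Type :=
  {p : ℝ × ℂ × ℂ // p.1 ^ 2 + ‖p.2.1‖ ^ 2 + ‖p.2.2‖ ^ 2 = 1}

/-- squash map: `v ↦ v² / ‖v‖` (with `0 ↦ 0`). -/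
noncomputable def gfun (v : ℂ) : ℂ := v ^ 2 / (‖v‖ : ℂ)

lemma norm_gfun (v : ℂ) : ‖gfun v‖ = ‖v‖ := by
  rcases eq_or_ne v 0 with rfl | hv
  · simp [gfun]
  · have h : ‖v‖ ≠ 0 := norm_ne_zero_iff.mpr hv
    rw [gfun, norm_div, norm_pow, Complex.norm_real, norm_norm, sq]
    field_simp

lemma gfun_spec (v : ℂ) : gfun v * (‖v‖ : ℂ) = v ^ 2 := by
  rcases eq_or_ne v 0 with rfl | hv
  · simp [gfun]
  · rw [gfun, div_mul_cancel₀]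
    exact Complex.ofReal_ne_zero.mpr (norm_ne_zero_iff.mpr hv)

lemma gfun_neg (v : ℂ) : gfun (-v) = gfun v := by
  simp [gfun, norm_neg, neg_sq]

lemma continuous_gfun : Continuous gfun := by
  rw [continuous_iff_continuousAt]
  intro v
  rcases eq_or_ne v 0 with rfl | hv
  · have h0 : gfun 0 = 0 := by simp [gfun]
    rw [ContinuousAt, h0]
    exact squeeze_zero_norm (fun w => (norm_gfun w).le) tendsto_norm_zero
  · exact (continuousAt_id.pow 2).div
      ((Complex.continuous_ofReal.comp continuous_norm).continuousAt)
      (Complex.ofReal_ne_zero.mpr (norm_ne_zero_iff.mpr hv))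

lemma gfun_surj (w : ℂ) : ∃ v, gfun v = w := by
  obtain ⟨v, hv⟩ := IsAlgClosed.exists_pow_nat_eq ((‖w‖ : ℂ) * w) (n := 2) (by norm_num)
  refine ⟨v, ?_⟩
  have hnv : ‖v‖ = ‖w‖ := by
    have h2 : ‖v‖ ^ 2 = ‖w‖ ^ 2 := by
      rw [← norm_pow, hv, norm_mul, Complex.norm_real, norm_norm, sq]
    nlinarith [norm_nonneg v, norm_nonneg w]
  rcases eq_or_ne w 0 with rfl | hw
  · have : v = 0 := norm_eq_zero.mp (by simp [hnv])
    simp [gfun, this]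
  · rw [gfun, hv, hnv]
    exact mul_div_cancel_left₀ w (Complex.ofReal_ne_zero.mpr (norm_ne_zero_iff.mpr hw))

lemma gfun_inj {v v' : ℂ} (h : gfun v = gfun v') : v = v' ∨ v = -v' := by
  have hn : ‖v‖ = ‖v'‖ := by rw [← norm_gfun, h, norm_gfun]
  have hsq : v ^ 2 = v' ^ 2 := by
    rw [← gfun_spec, ← gfun_spec, h, hn]
  exact sq_eq_sq_iff_eq_or_eq_neg.mp hsq

lemma cnormsq (z : ℂ) : ‖z‖ ^ 2 = z.re ^ 2 + z.im ^ 2 := by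
  rw [Complex.sq_norm, Complex.normSq_apply]; ring

/-- the "imaginary-parts" vector of a point of `ℝ × ℂ × ℂ`, as a complex number. -/
noncomputable def vfun (p : ℝ × ℂ × ℂ) : ℂ := (p.2.1.im : ℂ) + (p.2.2.im : ℂ) * Complex.I

lemma vfun_re (p : ℝ × ℂ × ℂ) : (vfun p).re = p.2.1.im := by simp [vfun]
lemma vfun_im (p : ℝ × ℂ × ℂ) : (vfun p).im = p.2.2.im := by simp [vfun]

lemma continuous_vfun : Continuous vfun := by
  unfold vfun
  fun_prop

/-- the forward map to Euclidean 5-space. -/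
noncomputable def toE (p : ℝ × ℂ × ℂ) : EuclideanSpace ℝ (Fin 5) :=
  (WithLp.equiv 2 (Fin 5 → ℝ)).symm
    ![p.1, p.2.1.re, p.2.2.re, (gfun (vfun p)).re, (gfun (vfun p)).im]

lemma toE_apply (p : ℝ × ℂ × ℂ) :
    toE p = ((WithLp.equiv 2 (Fin 5 → ℝ)).symm
      ![p.1, p.2.1.re, p.2.2.re, (gfun (vfun p)).re, (gfun (vfun p)).im]) := rfl

lemma continuous_toE : Continuous toE := by
  unfold toE
  refine Continuous.comp ?_ ?_
  · exact (PiLp.continuous_toLp (p := 2) (β := fun _ : Fin 5 => ℝ))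
  · apply continuous_pi
    intro i
    fin_cases i
    · exact continuous_fst
    · exact Complex.continuous_re.comp (continuous_fst.comp continuous_snd)
    · exact Complex.continuous_re.comp (continuous_snd.comp continuous_snd)
    · exact Complex.continuous_re.comp (continuous_gfun.comp continuous_vfun)
    · exact Complex.continuous_im.comp (continuous_gfun.comp continuous_vfun)

lemma norm_toE (p : Sph4) : ‖toE p.1‖ = 1 := by
  obtain ⟨⟨r, z₁, z₂⟩, hp⟩ := p
  have hw : (gfun (vfun (r, z₁, z₂))).re ^ 2 + (gfun (vfun (r, z₁, z₂))).im ^ 2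
      = z₁.im ^ 2 + z₂.im ^ 2 := by
    rw [← cnormsq, norm_gfun, cnormsq, vfun_re, vfun_im]
  have h1 : ‖z₁‖ ^ 2 = z₁.re ^ 2 + z₁.im ^ 2 := cnormsq z₁
  have h2 : ‖z₂‖ ^ 2 = z₂.re ^ 2 + z₂.im ^ 2 := cnormsq z₂
  rw [EuclideanSpace.norm_eq, Real.sqrt_eq_one]
  simp only [toE, WithLp.equiv_symm_apply, PiLp.toLp_apply, WithLp.ofLp_toLp, Fin.sum_univ_five, Matrix.cons_val_zero,
    Matrix.cons_val_one, Matrix.head_cons, Matrix.cons_val_two, Matrix.tail_cons,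
    Matrix.cons_val_three, Matrix.cons_val_four, Real.norm_eq_abs, _root_.sq_abs]
  simp only [Set.mem_setOf_eq] at hp
  linarith

abbrev R4 : Sph4 → Sph4 → Prop := fun x y : Sph4 =>
  y.1 = (x.1.1, (starRingEnd ℂ) x.1.2.1, (starRingEnd ℂ) x.1.2.2)

noncomputable def Phi (p : Sph4) : Metric.sphere (0 : EuclideanSpace ℝ (Fin 5)) 1 :=
  ⟨toE p.1, mem_sphere_zero_iff_norm.mpr (norm_toE p)⟩

lemma toE_conj (r : ℝ) (z₁ z₂ : ℂ) :
    toE (r, (starRingEnd ℂ) z₁, (starRingEnd ℂ) z₂) = toE (r, z₁, z₂) := by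
  have hv : vfun (r, (starRingEnd ℂ) z₁, (starRingEnd ℂ) z₂) = -vfun (r, z₁, z₂) := by
    simp only [vfun, Complex.conj_im]
    push_cast
    ring
  simp only [toE, hv, gfun_neg, Complex.conj_re]

lemma Phi_invariant : ∀ x y : Sph4, R4 x y → Phi x = Phi y := by
  rintro ⟨⟨r, z₁, z₂⟩, hx⟩ y h
  apply Subtype.ext
  show toE (r, z₁, z₂) = toE y.1
  rw [h]
  exact (toE_conj r z₁ z₂).symm

lemma compact_sph4 : IsCompact {p : ℝ × ℂ × ℂ | p.1 ^ 2 + ‖p.2.1‖ ^ 2 + ‖p.2.2‖ ^ 2 = 1} := by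
  apply Metric.isCompact_of_isClosed_isBounded
  · exact isClosed_eq (by fun_prop) continuous_const
  · apply Bornology.IsBounded.subset (Metric.isBounded_closedBall (x := (0 : ℝ × ℂ × ℂ)) (r := 1))
    intro p hp
    simp only [Set.mem_setOf_eq] at hp
    rw [Metric.mem_closedBall, dist_zero_right, Prod.norm_def, Prod.norm_def]
    have h1 : |p.1| ≤ 1 := by
      nlinarith [sq_nonneg ‖p.2.1‖, sq_nonneg ‖p.2.2‖, _root_.sq_abs p.1, abs_nonneg p.1]
    have h2 : ‖p.2.1‖ ≤ 1 := by
      nlinarith [norm_nonneg p.2.1, sq_nonneg p.1, sq_nonneg ‖p.2.2‖]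
    have h3 : ‖p.2.2‖ ≤ 1 := by
      nlinarith [norm_nonneg p.2.2, sq_nonneg p.1, sq_nonneg ‖p.2.1‖]
    exact max_le (by rwa [Real.norm_eq_abs]) (max_le h2 h3)

instance : CompactSpace Sph4 := isCompact_iff_compactSpace.mp compact_sph4

noncomputable def Fmap : Quot R4 → Metric.sphere (0 : EuclideanSpace ℝ (Fin 5)) 1 :=
  Quot.lift Phi Phi_invariant

lemma Fmap_cont : Continuous Fmap :=
  continuous_quot_lift _ ((continuous_toE.comp continuous_subtype_val).subtype_mk _)

lemma Fmap_surj : Function.Surjective Fmap := by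
  rintro ⟨u, hu⟩
  obtain ⟨v, hv⟩ := gfun_surj ((u 3 : ℂ) + (u 4 : ℂ) * Complex.I)
  have hsum : (u 0)^2 + (u 1)^2 + (u 2)^2 + (u 3)^2 + (u 4)^2 = 1 := by
    have hnu : Real.sqrt (∑ i, ‖u i‖^2) = 1 := by
      rw [← EuclideanSpace.norm_eq]; exact mem_sphere_zero_iff_norm.mp hu
    have hsum := Real.sqrt_eq_one.mp hnu
    rw [Fin.sum_univ_five] at hsum
    simpa [Real.norm_eq_abs, _root_.sq_abs] using hsum
  have hv2 : v.re ^ 2 + v.im ^ 2 = (u 3) ^ 2 + (u 4) ^ 2 := by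
    have h5 : ‖v‖ ^ 2 = ‖((u 3 : ℂ) + (u 4 : ℂ) * Complex.I)‖ ^ 2 := by
      rw [← norm_gfun, hv]
    rw [cnormsq, cnormsq] at h5
    simpa using h5
  have hmem : ((u 0, ⟨u 1, v.re⟩, ⟨u 2, v.im⟩) : ℝ × ℂ × ℂ).1 ^ 2
      + ‖((u 0, ⟨u 1, v.re⟩, ⟨u 2, v.im⟩) : ℝ × ℂ × ℂ).2.1‖ ^ 2
      + ‖((u 0, ⟨u 1, v.re⟩, ⟨u 2, v.im⟩) : ℝ × ℂ × ℂ).2.2‖ ^ 2 = 1 := by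
    rw [cnormsq, cnormsq]
    show u 0 ^ 2 + (u 1 ^ 2 + v.re ^ 2) + (u 2 ^ 2 + v.im ^ 2) = 1
    linarith
  refine ⟨Quot.mk _ ⟨(u 0, ⟨u 1, v.re⟩, ⟨u 2, v.im⟩), hmem⟩, ?_⟩
  apply Subtype.ext
  show toE ((u 0, ⟨u 1, v.re⟩, ⟨u 2, v.im⟩) : ℝ × ℂ × ℂ) = u
  have hvx : vfun ((u 0, ⟨u 1, v.re⟩, ⟨u 2, v.im⟩) : ℝ × ℂ × ℂ) = v := by
    apply Complex.ext <;> simp [vfun]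
  apply (WithLp.equiv 2 _).injective
  funext i
  fin_cases i
  · rfl
  · rfl
  · rfl
  · show (gfun (vfun _)).re = u 3
    rw [hvx, hv]; simp
  · show (gfun (vfun _)).im = u 4
    rw [hvx, hv]; simp

lemma Fmap_inj : Function.Injective Fmap := by
  intro x y
  refine Quot.induction_on₂ x y ?_
  rintro ⟨⟨r, z₁, z₂⟩, ha⟩ ⟨⟨s, w₁, w₂⟩, hb⟩ h
  have h' : toE (r, z₁, z₂) = toE (s, w₁, w₂) := congrArg Subtype.val h
  have e0 : r = s := by simpa [toE, WithLp.equiv_symm_apply] using congrArg (fun x => x.ofLp 0) h'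
  have e1 : z₁.re = w₁.re := by simpa [toE, WithLp.equiv_symm_apply] using congrArg (fun x => x.ofLp 1) h'
  have e2 : z₂.re = w₂.re := by simpa [toE, WithLp.equiv_symm_apply] using congrArg (fun x => x.ofLp 2) h'
  have e3 : (gfun (vfun (r, z₁, z₂))).re = (gfun (vfun (s, w₁, w₂))).re := by
    simpa [toE, WithLp.equiv_symm_apply] using congrArg (fun x => x.ofLp 3) h'
  have e4 : (gfun (vfun (r, z₁, z₂))).im = (gfun (vfun (s, w₁, w₂))).im := by
    simpa [toE, WithLp.equiv_symm_apply] using congrArg (fun x => x.ofLp 4) h'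
  have hg : gfun (vfun (r, z₁, z₂)) = gfun (vfun (s, w₁, w₂)) :=
    Complex.ext e3 e4
  rcases gfun_inj hg with hvv | hvv
  · have i1 : z₁.im = w₁.im := by
      have := congrArg Complex.re hvv
      simpa [vfun_re] using this
    have i2 : z₂.im = w₂.im := by
      have := congrArg Complex.im hvv
      simpa [vfun_im] using this
    apply congrArg (Quot.mk _)
    apply Subtype.ext
    exact Prod.ext e0 (Prod.ext (Complex.ext e1 i1) (Complex.ext e2 i2))
  · have i1 : z₁.im = -w₁.im := by
      have := congrArg Complex.re hvv
      simpa [vfun_re, vfun_im] using this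
    have i2 : z₂.im = -w₂.im := by
      have := congrArg Complex.im hvv
      simpa [vfun_re, vfun_im] using this
    apply Quot.sound
    show ((s, w₁, w₂) : ℝ × ℂ × ℂ) = (r, (starRingEnd ℂ) z₁, (starRingEnd ℂ) z₂)
    refine Prod.ext e0.symm (Prod.ext ?_ ?_)
    · exact Complex.ext (by simpa using e1.symm) (by simp [Complex.conj_im]; linarith)
    · exact Complex.ext (by simpa using e2.symm) (by simp [Complex.conj_im]; linarith)

/-- `S⁴/σ ≅ S⁴` for the involution `σ(r,z₁,z₂) = (r, conj z₁, conj z₂)`. -/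
theorem S4_quotient_conj_homeomorphic_S4 :
    Nonempty (Quot (fun x y : Sph4 =>
        y.1 = (x.1.1, (starRingEnd ℂ) x.1.2.1, (starRingEnd ℂ) x.1.2.2))
      ≃ₜ Metric.sphere (0 : EuclideanSpace ℝ (Fin 5)) 1) := by
  exact ⟨Continuous.homeoOfEquivCompactToT2
    (f := Equiv.ofBijective Fmap ⟨Fmap_inj, Fmap_surj⟩) Fmap_cont⟩
end
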